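/- arXiv:1603.05329 — 2 statements merged into one kernel-verified Lean document; each statement's English description precedes it below -/
import Mathlib

section
/- Suppose q > (np − n + p + pα)/(n − p) with n > p > 1, α ≥ 0, q > 1. Let w solve (φ(w'))' + ((n−1)/t)φ(w') + t^α w^q = 0 on [0, t₀] with w(0) = 1, w'(0) = 0, w > 0 on [0, t₀), and w(t₀) = 0. Then a contradiction follows; i.e., no such t₀ > 0 exists, so the solution w satisfies w(t) > 0 for all t ≥ 0. -/
open Real Set MeasureTheory Filter Metric

private lemma phi_abs {p : ℝ} (hp : 1 < p) (v : ℝ) : |v * |v| ^ (p-2)| = |v| ^ (p-1) := by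
  rcases eq_or_ne v 0 with rfl | h
  · simp [Real.zero_rpow (by intro h; linarith [h] : p - 1 ≠ 0)]
  · have hv : (0:ℝ) < |v| := abs_pos.2 h
    rw [abs_mul, abs_of_nonneg (Real.rpow_nonneg (abs_nonneg v) _),
      show p - 1 = 1 + (p-2) by ring, Real.rpow_add hv, Real.rpow_one]

private lemma phi_cont {p : ℝ} (hp : 1 < p) : Continuous (fun v : ℝ => v * |v| ^ (p-2)) := by
  rw [continuous_iff_continuousAt]
  intro v
  rcases eq_or_ne v 0 with rfl | h
  · have h0 : (0 : ℝ) * |(0:ℝ)| ^ (p-2) = 0 := by simp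
    unfold ContinuousAt
    simp only [h0]
    apply squeeze_zero_norm (a := fun v : ℝ => |v| ^ (p-1))
    · intro v; rw [Real.norm_eq_abs]; exact le_of_eq (phi_abs hp v)
    · have hc : ContinuousAt (fun v : ℝ => |v| ^ (p-1)) 0 :=
        (Real.continuousAt_rpow_const _ _ (Or.inr (by linarith))).comp
          continuous_abs.continuousAt
      have h1 : |(0:ℝ)| ^ (p-1) = 0 := by
        simp [Real.zero_rpow (by intro h; linarith [h] : p - 1 ≠ 0)]
      have h2 := hc.tendsto
      rw [show |(0:ℝ)| = 0 from abs_zero, Real.zero_rpow (by intro h'; linarith [h'] : p - 1 ≠ 0)] at h2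
      exact h2
  · exact continuousAt_id.mul
      ((Real.continuousAt_rpow_const _ _ (Or.inl (abs_ne_zero.2 h))).comp
        continuous_abs.continuousAt)

private lemma phi_inv {p : ℝ} (hp : 1 < p) {v X : ℝ} (hX : 0 < X)
    (h : v * |v| ^ (p-2) = -X) : v = -(X ^ (p-1)⁻¹) := by
  have hv : v < 0 := by
    by_contra hv
    push_neg at hv
    have h1 : 0 ≤ v * |v| ^ (p-2) := mul_nonneg hv (Real.rpow_nonneg (abs_nonneg v) _)
    linarith
  have habs : |v| = -v := abs_of_neg hv
  have hnv : (0:ℝ) < -v := by linarith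
  have h2 : (-v) ^ (p-1) = X := by
    rw [show p - 1 = 1 + (p-2) by ring, Real.rpow_add hnv, Real.rpow_one]
    rw [habs] at h
    nlinarith [h]
  have h3 : ((-v) ^ (p-1)) ^ (p-1)⁻¹ = -v :=
    Real.rpow_rpow_inv (le_of_lt hnv) (by intro h'; linarith [h'])
  rw [h2] at h3
  linarith [h3]

private lemma slope_bound {g F : ℝ → ℝ} {a b C : ℝ} (hab : a ≤ b)
    (hg : ContinuousOn g (Icc a b)) (hd : ∀ x ∈ Ioo a b, HasDerivAt g (F x) x)
    (hC : ∀ x ∈ Ioo a b, |F x| ≤ C) : |g b - g a| ≤ C * (b - a) := by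
  rcases eq_or_lt_of_le hab with rfl | h
  · simp
  · obtain ⟨c, hc, hceq⟩ := exists_hasDerivAt_eq_slope g F h hg hd
    have h1 : g b - g a = F c * (b - a) := by
      rw [hceq]; field_simp [sub_ne_zero.2 (ne_of_gt h)]
    rw [h1, abs_mul, abs_of_pos (by linarith : (0:ℝ) < b - a)]
    exact mul_le_mul_of_nonneg_right (hC c hc) (by linarith)

private lemma image_volume_le {s : Set ℝ} (hs : MeasurableSet s) {f : ℝ → ℝ} {f' : ℝ → ℝ}
    (hf : ∀ x ∈ s, HasDerivWithinAt f (f' x) s x) {K : ℝ} (hK : ∀ x ∈ s, |f' x| ≤ K) :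
    volume (f '' s) ≤ ENNReal.ofReal K * volume s := by
  have h := MeasureTheory.addHaar_image_le_lintegral_abs_det_fderiv volume hs
      (f' := fun x => (1 : ℝ →L[ℝ] ℝ).smulRight (f' x))
      (fun x hx => (hf x hx).hasFDerivWithinAt)
  refine h.trans ?_
  have h2 : ∀ x ∈ s, ENNReal.ofReal |((1 : ℝ →L[ℝ] ℝ).smulRight (f' x)).det|
      ≤ ENNReal.ofReal K := by
    intro x hx
    rw [ContinuousLinearMap.smulRight_one_eq_toSpanSingleton, ContinuousLinearMap.det_toSpanSingleton]
    exact ENNReal.ofReal_le_ofReal (hK x hx)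
  calc ∫⁻ x in s, ENNReal.ofReal |((1 : ℝ →L[ℝ] ℝ).smulRight (f' x)).det| ∂volume
      ≤ ∫⁻ _ in s, ENNReal.ofReal K ∂volume := setLIntegral_mono measurable_const h2
    _ = ENNReal.ofReal K * volume s := by rw [setLIntegral_const]

private lemma gap_hasDerivAt {g A F : ℝ → ℝ} {E : Set ℝ} (hEc : IsClosed E)
    {t δ C A' : ℝ} (hδ : 0 < δ) (htE : t ∈ E)
    (hdens : Tendsto (fun r => volume (E ∩ closedBall t r) / volume (closedBall t r))
        (nhdsWithin 0 (Ioi 0)) (nhds 1))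
    (hgA : ∀ x ∈ E, g x = A x)
    (hF : ∀ x ∈ Icc (t - δ) (t + δ), x ∉ E → HasDerivAt g (F x) x)
    (hgc : ContinuousOn g (Icc (t - δ) (t + δ)))
    (hC : ∀ x ∈ Icc (t - δ) (t + δ), |F x| ≤ C)
    (hA : HasDerivAt A A' t) : HasDerivAt g A' t := by
  have hC0 : 0 ≤ C := le_trans (abs_nonneg _) (hC t ⟨by linarith, by linarith⟩)
  set M := C + |A'| + 1 with hMdef
  have hM : (0:ℝ) < M := by positivity
  rw [hasDerivAt_iff_isLittleO, Asymptotics.isLittleO_iff]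
  intro ε hε
  set η := min (ε / (4 * M)) (1/2) with hηdef
  have hη : 0 < η := lt_min (by positivity) (by norm_num)
  have hη1 : η < 1 := lt_of_le_of_lt (min_le_right _ _) (by norm_num)
  have hηM : 2 * η * (C + |A'|) ≤ ε / 2 := by
    have h1 : η ≤ ε / (4 * M) := min_le_left _ _
    have h2 : C + |A'| ≤ M := by rw [hMdef]; linarith
    have h3 : 0 ≤ C + |A'| := by positivity
    calc 2 * η * (C + |A'|) ≤ 2 * (ε / (4 * M)) * M := by
          apply mul_le_mul (by linarith) h2 h3 (by positivity)
      _ = ε / 2 := by field_simp; ring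
  -- density: get r₀
  have h1 : ∀ᶠ r in nhdsWithin 0 (Ioi 0), ENNReal.ofReal (1 - η) <
      volume (E ∩ closedBall t r) / volume (closedBall t r) :=
    hdens.eventually_const_lt (ENNReal.ofReal_lt_one.2 (by linarith))
  obtain ⟨r₀, hr₀pos, hr₀⟩ := mem_nhdsGT_iff_exists_Ioc_subset.1 h1
  rw [mem_Ioi] at hr₀pos
  -- littleO of A
  have h2 := (Asymptotics.isLittleO_iff.1 (hasDerivAt_iff_isLittleO.1 hA)) (half_pos hε)
  obtain ⟨δ₁, hδ₁pos, hδ₁⟩ := Metric.eventually_nhds_iff.1 h2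
  -- key density estimate, symmetric in orientation
  have hkey : ∀ r : ℝ, 0 < r → r ≤ r₀ → ∀ s : Set ℝ, s ⊆ closedBall t r \ E →
      volume s ≤ ENNReal.ofReal (η * (2 * r)) := by
    intro r hr hrr s hs
    have hb := hr₀ ⟨hr, hrr⟩
    have hballne : volume (closedBall t r) ≠ 0 := by
      rw [Real.volume_closedBall]; simp [ENNReal.ofReal_eq_zero]; linarith
    have hballtop : volume (closedBall t r) ≠ ⊤ := by
      rw [Real.volume_closedBall]; exact ENNReal.ofReal_ne_top
    have hEB : ENNReal.ofReal ((1 - η) * (2 * r)) ≤ volume (E ∩ closedBall t r) := by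
      have := (ENNReal.lt_div_iff_mul_lt (Or.inl hballne) (Or.inl hballtop)).1 hb
      rw [Real.volume_closedBall] at this
      rw [ENNReal.ofReal_mul (by linarith)]
      exact le_of_lt this
    calc volume s ≤ volume (closedBall t r \ E) := measure_mono hs
      _ = volume (closedBall t r \ (E ∩ closedBall t r)) := by
          rw [Set.diff_inter_self_eq_diff]
      _ = volume (closedBall t r) - volume (E ∩ closedBall t r) := by
          apply measure_diff inter_subset_right
            ((hEc.measurableSet.inter measurableSet_closedBall).nullMeasurableSet)
          exact ne_of_lt (lt_of_le_of_lt (measure_mono inter_subset_right)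
            (lt_of_le_of_ne le_top hballtop))
      _ ≤ ENNReal.ofReal (2 * r) - ENNReal.ofReal ((1 - η) * (2 * r)) := by
          apply tsub_le_tsub (le_of_eq (Real.volume_closedBall t r)) hEB
      _ = ENNReal.ofReal (2 * r - (1 - η) * (2 * r)) := by
          rw [ENNReal.ofReal_sub _ (by nlinarith)]
      _ = ENNReal.ofReal (η * (2 * r)) := by ring_nf
  -- main estimate
  rw [Metric.eventually_nhds_iff]
  refine ⟨min (min δ r₀) δ₁, by positivity, ?_⟩
  intro s hs
  rw [Real.dist_eq] at hs
  rcases eq_or_ne s t with rfl | hst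
  · simp
  have hr : 0 < |s - t| := abs_pos.2 (sub_ne_zero.2 hst)
  set r := |s - t| with hrdef
  have hrδ : r < δ := lt_of_lt_of_le hs (le_trans (min_le_left _ _) (min_le_left _ _))
  have hrr₀ : r ≤ r₀ := le_of_lt (lt_of_lt_of_le hs (le_trans (min_le_left _ _) (min_le_right _ _)))
  have hrδ₁ : r < δ₁ := lt_of_lt_of_le hs (min_le_right _ _)
  rw [Real.norm_eq_abs, Real.norm_eq_abs, ← hrdef]
  rcases le_or_gt t s with hts | hts
  · -- forward case : t < s
    have hrts : r = s - t := abs_of_nonneg (by linarith)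
    set u := sSup (E ∩ Icc t s) with hudef
    have hne : (E ∩ Icc t s).Nonempty := ⟨t, htE, le_refl t, hts⟩
    have hbdd : BddAbove (E ∩ Icc t s) := (bddAbove_Icc).mono inter_subset_right
    have hu : u ∈ E ∩ Icc t s := (hEc.inter isClosed_Icc).csSup_mem hne hbdd
    have hgap : ∀ x ∈ Ioc u s, x ∉ E := by
      intro x hx hxE
      have : x ≤ u := le_csSup hbdd ⟨hxE, le_trans hu.2.1 (le_of_lt hx.1), hx.2⟩
      exact absurd hx.1 (not_lt.2 this)
    have hsub : Icc u s ⊆ Icc (t - δ) (t + δ) := by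
      intro x hx
      constructor
      · linarith [hu.2.1, hx.1]
      · have := hx.2; have := hrts; nlinarith [le_of_lt hrδ]
    have key1 : |g s - g u| ≤ C * (s - u) := by
      apply slope_bound hu.2.2 (hgc.mono hsub)
      · intro x hx; exact hF x (hsub ⟨le_of_lt hx.1, le_of_lt hx.2⟩)
          (hgap x ⟨hx.1, le_of_lt hx.2⟩)
      · intro x hx; exact hC x (hsub ⟨le_of_lt hx.1, le_of_lt hx.2⟩)
    have key2 : s - u ≤ η * (2 * r) := by
      have h3 : Ioc u s ⊆ closedBall t r \ E := by
        intro x hx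
        refine ⟨?_, hgap x hx⟩
        rw [Real.closedBall_eq_Icc]
        constructor
        · have := hu.2.1; linarith [hx.1, hrts]
        · have := hx.2; linarith [hrts]
      have := hkey r hr hrr₀ (Ioc u s) h3
      rw [Real.volume_Ioc] at this
      have h4 : (0:ℝ) ≤ η * (2 * r) := by positivity
      exact (ENNReal.ofReal_le_ofReal_iff h4).1 this
    have key3 : |A u - A t - (u - t) * A'| ≤ ε / 2 * |u - t| := by
      have hd : dist u t < δ₁ := by
        rw [Real.dist_eq, abs_of_nonneg (by linarith [hu.2.1] : (0:ℝ) ≤ u - t)]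
        linarith [hu.2.2, hrts]
      have := hδ₁ hd
      rw [Real.norm_eq_abs, Real.norm_eq_abs, smul_eq_mul] at this
      exact this
    have hdecomp : g s - g t - (s - t) • A'
        = (g s - g u) + (A u - A t - (u - t) * A') + (u - s) * A' := by
      rw [hgA u hu.1, hgA t htE, smul_eq_mul]; ring
    rw [hdecomp]
    have habs : |u - t| ≤ r := by
      rw [abs_of_nonneg (by linarith [hu.2.1] : (0:ℝ) ≤ u - t)]
      linarith [hu.2.2, hrts]
    calc |(g s - g u) + (A u - A t - (u - t) * A') + (u - s) * A'|
        ≤ |g s - g u| + |A u - A t - (u - t) * A'| + |(u - s) * A'| :=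
          abs_add_three _ _ _
      _ ≤ C * (s - u) + ε / 2 * |u - t| + (s - u) * |A'| := by
          refine add_le_add (add_le_add key1 key3) ?_
          rw [abs_mul, abs_of_nonpos (by linarith [hu.2.2] : u - s ≤ 0)]
          exact le_of_eq (by ring)
      _ ≤ C * (η * (2*r)) + ε / 2 * r + (η * (2*r)) * |A'| := by
          refine add_le_add (add_le_add ?_ ?_) ?_
          · exact mul_le_mul_of_nonneg_left key2 hC0
          · exact mul_le_mul_of_nonneg_left habs (by positivity)
          · exact mul_le_mul_of_nonneg_right key2 (abs_nonneg _)
      _ = 2 * η * (C + |A'|) * r + ε / 2 * r := by ring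
      _ ≤ ε / 2 * r + ε / 2 * r :=
          add_le_add (mul_le_mul_of_nonneg_right hηM (le_of_lt hr)) le_rfl
      _ = ε * r := by ring
  · -- backward case : s < t
    have hrts : r = t - s := by
      rw [hrdef, abs_sub_comm]; exact abs_of_nonneg (by linarith)
    set u := sInf (E ∩ Icc s t) with hudef
    have hne : (E ∩ Icc s t).Nonempty := ⟨t, htE, le_of_lt hts, le_refl t⟩
    have hbdd : BddBelow (E ∩ Icc s t) := (bddBelow_Icc).mono inter_subset_right
    have hu : u ∈ E ∩ Icc s t := (hEc.inter isClosed_Icc).csInf_mem hne hbdd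
    have hgap : ∀ x ∈ Ico s u, x ∉ E := by
      intro x hx hxE
      have : u ≤ x := csInf_le hbdd ⟨hxE, hx.1, le_trans (le_of_lt hx.2) hu.2.2⟩
      exact absurd hx.2 (not_lt.2 this)
    have hsub : Icc s u ⊆ Icc (t - δ) (t + δ) := by
      intro x hx
      constructor
      · have := hx.1; nlinarith [le_of_lt hrδ, hrts]
      · linarith [hu.2.2, hx.2]
    have key1 : |g u - g s| ≤ C * (u - s) := by
      apply slope_bound hu.2.1 (hgc.mono hsub)
      · intro x hx; exact hF x (hsub ⟨le_of_lt hx.1, le_of_lt hx.2⟩)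
          (hgap x ⟨le_of_lt hx.1, hx.2⟩)
      · intro x hx; exact hC x (hsub ⟨le_of_lt hx.1, le_of_lt hx.2⟩)
    have key2 : u - s ≤ η * (2 * r) := by
      have h3 : Ico s u ⊆ closedBall t r \ E := by
        intro x hx
        refine ⟨?_, hgap x hx⟩
        rw [Real.closedBall_eq_Icc]
        constructor
        · have := hx.1; linarith [hrts]
        · have := hu.2.2; linarith [le_of_lt hx.2, hrts]
      have := hkey r hr hrr₀ (Ico s u) h3
      rw [Real.volume_Ico] at this
      have h4 : (0:ℝ) ≤ η * (2 * r) := by positivity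
      exact (ENNReal.ofReal_le_ofReal_iff h4).1 this
    have key3 : |A u - A t - (u - t) * A'| ≤ ε / 2 * |u - t| := by
      have hd : dist u t < δ₁ := by
        rw [Real.dist_eq, abs_of_nonpos (by linarith [hu.2.2] : u - t ≤ 0)]
        linarith [hu.2.1, hrts]
      have := hδ₁ hd
      rw [Real.norm_eq_abs, Real.norm_eq_abs, smul_eq_mul] at this
      exact this
    have hdecomp : g s - g t - (s - t) • A'
        = -(g u - g s) + (A u - A t - (u - t) * A') + (u - s) * A' := by
      rw [hgA u hu.1, hgA t htE, smul_eq_mul]; ring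
    rw [hdecomp]
    have habs : |u - t| ≤ r := by
      rw [abs_of_nonpos (by linarith [hu.2.2] : u - t ≤ 0)]
      linarith [hu.2.1, hrts]
    calc |-(g u - g s) + (A u - A t - (u - t) * A') + (u - s) * A'|
        ≤ |-(g u - g s)| + |A u - A t - (u - t) * A'| + |(u - s) * A'| :=
          abs_add_three _ _ _
      _ ≤ C * (u - s) + ε / 2 * |u - t| + (u - s) * |A'| := by
          rw [abs_neg]
          refine add_le_add (add_le_add key1 key3) ?_
          rw [abs_mul, abs_of_nonneg (by linarith [hu.2.1] : (0:ℝ) ≤ u - s)]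
      _ ≤ C * (η * (2*r)) + ε / 2 * r + (η * (2*r)) * |A'| := by
          refine add_le_add (add_le_add ?_ ?_) ?_
          · exact mul_le_mul_of_nonneg_left key2 hC0
          · exact mul_le_mul_of_nonneg_left habs (by positivity)
          · exact mul_le_mul_of_nonneg_right key2 (abs_nonneg _)
      _ = 2 * η * (C + |A'|) * r + ε / 2 * r := by ring
      _ ≤ ε / 2 * r + ε / 2 * r :=
          add_le_add (mul_le_mul_of_nonneg_right hηM (le_of_lt hr)) le_rfl
      _ = ε * r := by ring

set_option maxHeartbeats 1000000 in
/-- Under `q > (np − n + p + pα)/(n − p)`, a positive solution of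
`(φ(w'))' + ((n−1)/t)φ(w') + t^α w^q = 0` with `w(0)=1`, `w'(0)=0` cannot
vanish at some `t₀ > 0`: a contradiction follows. -/
theorem stmt_4 (p q α n t₀ : ℝ) (hp : 1 < p) (hq : 1 < q) (hα : 0 ≤ α) (hn : p < n)
    (hq' : q > (n * p - n + p + p * α) / (n - p)) (ht₀ : 0 < t₀)
    (φ : ℝ → ℝ) (hφ : ∀ v, φ v = v * |v| ^ (p - 2))
    (w : ℝ → ℝ) (hw : ContDiffOn ℝ 1 w (Icc 0 t₀))
    (hode : ∀ t ∈ Ioo 0 t₀,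
      deriv (fun s => φ (deriv w s)) t + ((n - 1) / t) * φ (deriv w t)
        + t ^ α * (w t) ^ q = 0)
    (hw0 : w 0 = 1) (hw0' : deriv w 0 = 0)
    (hpos : ∀ t ∈ Ico 0 t₀, 0 < w t) (hzero : w t₀ = 0) :
    False := by
  have h0p1 : (0:ℝ) < p - 1 := by linarith
  have h1n : (1:ℝ) < n := by linarith
  have hn1 : n - 1 ≠ 0 := by intro h; linarith [h]
  set e : ℝ := (p-1)⁻¹ with hedef
  have hepos : 0 < e := by positivity
  have hep : e * (p - 1) = 1 := by rw [hedef]; field_simp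
  have hq1 : (0:ℝ) < q + 1 := by linarith
  set G : ℝ → ℝ := fun s => φ (deriv w s) with hGdef
  set ρ : ℝ → ℝ := fun x => ∫ s in (0:ℝ)..x, s ^ (n-1+α) * w s ^ q with hρdef
  set F : ℝ → ℝ := fun x => -((n-1)/x * G x + x ^ α * w x ^ q) with hFdef
  set A : ℝ → ℝ := fun x => -(x ^ (1+α) * w x ^ q / (n-1)) with hAdef
  set A' : ℝ → ℝ := fun x =>
    -(((((1:ℝ)+α) * x ^ (1+α-1)) * w x ^ q + x ^ (1+α) * (deriv w x * q * w x ^ (q-1))) / (n-1))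
    with hA'def
  set θ : ℝ → ℝ := fun x => x ^ (n-1) * A x + ρ x with hθdef
  set θ' : ℝ → ℝ := fun x => ((n-1) * x ^ (n-1-1)) * A x + x ^ (n-1) * A' x
    + x ^ (n-1+α) * w x ^ q with hθ'def
  set m : ℝ → ℝ := fun x => x ^ (n-1) * G x + ρ x with hmdef
  set N : Set ℝ := {x | x ∈ Ioo 0 t₀ ∧ ¬ DifferentiableAt ℝ G x} with hNdef
  set P : ℝ → ℝ := fun x => (p-1) * (ρ x ^ (p*e) * x ^ (n - (n-1)*(p*e)))
    + (p/(q+1)) * (x ^ (n+α) * w x ^ (q+1)) - (n-p) * (ρ x * w x) with hPdef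
  -- basic facts about w
  have hwd : ∀ x ∈ Ioo 0 t₀, HasDerivAt w (deriv w x) x := by
    intro x hx
    exact ((hw.contDiffAt (Icc_mem_nhds hx.1 hx.2)).differentiableAt one_ne_zero).hasDerivAt
  have hw_cont : ContinuousOn w (Icc 0 t₀) := hw.continuousOn
  have hwc : ∀ x ∈ Ioo 0 t₀, ContinuousAt w x := by
    intro x hx
    exact (hw.contDiffAt (Icc_mem_nhds hx.1 hx.2)).continuousAt
  have hdc : ContinuousOn (deriv w) (Ioo 0 t₀) := by
    have h2 := hw.continuousOn_derivWithin (uniqueDiffOn_Icc ht₀) le_rfl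
    exact (h2.mono Ioo_subset_Icc_self).congr
      (fun x hx => (derivWithin_of_mem_nhds (Icc_mem_nhds hx.1 hx.2)).symm)
  have hG_cont : ContinuousOn G (Ioo 0 t₀) := by
    have h3 : ContinuousOn ((fun v : ℝ => v * |v| ^ (p-2)) ∘ deriv w) (Ioo 0 t₀) :=
      (phi_cont hp).comp_continuousOn hdc
    exact h3.congr (fun x hx => hφ (deriv w x))
  obtain ⟨Cg, hCg0, hCg⟩ : ∃ Cg : ℝ, 0 ≤ Cg ∧ ∀ x ∈ Ioo 0 t₀, |G x| ≤ Cg := by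
    obtain ⟨CW, hCW⟩ := isCompact_Icc.exists_bound_of_continuousOn
      (hw.continuousOn_derivWithin (uniqueDiffOn_Icc ht₀) le_rfl)
    refine ⟨(max CW 1) ^ (p-1), Real.rpow_nonneg (le_trans zero_le_one (le_max_right _ _)) _, ?_⟩
    intro x hx
    have h1 : |G x| = |deriv w x| ^ (p-1) := by
      rw [hGdef]; simp only; rw [hφ]; exact phi_abs hp _
    rw [h1]
    apply Real.rpow_le_rpow (abs_nonneg _) _ (by linarith)
    have h2 := hCW x (Ioo_subset_Icc_self hx)
    rw [derivWithin_of_mem_nhds (Icc_mem_nhds hx.1 hx.2), Real.norm_eq_abs] at h2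
    exact le_trans h2 (le_max_left _ _)
  have hwnn : ∀ x ∈ Icc 0 t₀, 0 ≤ w x := by
    intro x hx
    rcases eq_or_lt_of_le hx.2 with rfl | h
    · exact le_of_eq hzero.symm
    · exact le_of_lt (hpos x ⟨hx.1, h⟩)
  have hwpos' : ∀ x ∈ Ioo 0 t₀, 0 < w x := fun x hx => hpos x ⟨le_of_lt hx.1, hx.2⟩
  obtain ⟨Cw, hCw0, hCw⟩ : ∃ Cw : ℝ, 0 ≤ Cw ∧ ∀ x ∈ Icc 0 t₀, w x ≤ Cw := by
    obtain ⟨C0, hC0⟩ := isCompact_Icc.exists_bound_of_continuousOn hw_cont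
    refine ⟨max C0 0, le_max_right _ _, ?_⟩
    intro x hx
    exact le_trans (le_trans (le_abs_self _) (hC0 x hx)) (le_max_left _ _)
  -- integrand and ρ
  have hInt_cont : ContinuousOn (fun s => s ^ (n-1+α) * w s ^ q) (Icc 0 t₀) := by
    apply ContinuousOn.mul
    · intro x hx
      exact (Real.continuousAt_rpow_const x _ (Or.inr (by linarith))).continuousWithinAt
    · exact hw_cont.rpow_const (fun x hx => Or.inr (by linarith))
  have hint : IntegrableOn (fun s => s ^ (n-1+α) * w s ^ q) (Icc 0 t₀) := by
    exact hInt_cont.integrableOn_Icc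
  have hρd : ∀ x ∈ Ioo 0 t₀, HasDerivAt ρ (x ^ (n-1+α) * w x ^ q) x := by
    intro x hx
    apply intervalIntegral.integral_hasDerivAt_right
    · exact ((hInt_cont.mono (Icc_subset_Icc le_rfl hx.2.le)).intervalIntegrable_of_Icc hx.1.le)
    · refine ⟨Ioo 0 t₀, Ioo_mem_nhds hx.1 hx.2, ?_⟩
      exact (hInt_cont.mono Ioo_subset_Icc_self).aestronglyMeasurable measurableSet_Ioo
    · apply ContinuousAt.mul
      · exact Real.continuousAt_rpow_const x _ (Or.inl (ne_of_gt hx.1))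
      · exact (hwc x hx).rpow_const (Or.inr (by linarith))
  have hρ_cont : ContinuousOn ρ (Icc 0 t₀) := by
    have h1 := intervalIntegral.continuousOn_primitive (a := 0) (b := t₀) hint
    apply h1.congr
    intro x hx
    rw [hρdef]
    simp only
    rw [intervalIntegral.integral_of_le hx.1]
  have hρpos : ∀ x ∈ Ioc 0 t₀, 0 < ρ x := by
    intro x hx
    apply intervalIntegral.intervalIntegral_pos_of_pos_on
    · exact ((hInt_cont.mono (Icc_subset_Icc le_rfl hx.2)).intervalIntegrable_of_Icc hx.1.le)
    · intro s hs
      apply mul_pos (Real.rpow_pos_of_pos hs.1 _)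
      exact Real.rpow_pos_of_pos (hpos s ⟨hs.1.le, lt_of_lt_of_le hs.2 hx.2⟩) _
    · exact hx.1
  have hρle : ∀ x ∈ Icc 0 t₀, ρ x ≤ (Cw ^ q / (n+α)) * x ^ (n+α) := by
    intro x hx
    have hx0 : (0:ℝ) ≤ x := hx.1
    have hi1 : IntervalIntegrable (fun s => s ^ (n-1+α) * w s ^ q) volume 0 x :=
      (hInt_cont.mono (Icc_subset_Icc le_rfl hx.2)).intervalIntegrable_of_Icc hx0
    have hi2 : IntervalIntegrable (fun s => Cw ^ q * s ^ (n-1+α)) volume 0 x := by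
      apply ContinuousOn.intervalIntegrable_of_Icc hx0
      exact continuousOn_const.mul (fun y hy =>
        (Real.continuousAt_rpow_const y _ (Or.inr (by linarith))).continuousWithinAt)
    have h2 : ρ x ≤ ∫ s in (0:ℝ)..x, Cw ^ q * s ^ (n-1+α) := by
      rw [hρdef]; simp only
      apply intervalIntegral.integral_mono_on hx0 hi1 hi2
      intro s hs
      rw [mul_comm (Cw ^ q)]
      apply mul_le_mul_of_nonneg_left _ (Real.rpow_nonneg hs.1 _)
      exact Real.rpow_le_rpow (hwnn s ⟨hs.1, le_trans hs.2 hx.2⟩)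
        (hCw s ⟨hs.1, le_trans hs.2 hx.2⟩) (by linarith)
    rw [intervalIntegral.integral_const_mul, integral_rpow (Or.inl (by linarith))] at h2
    rw [Real.zero_rpow (by intro h'; linarith [h'] : n-1+α+1 ≠ 0)] at h2
    calc ρ x ≤ Cw ^ q * ((x ^ (n-1+α+1) - 0)/(n-1+α+1)) := h2
      _ = (Cw ^ q / (n+α)) * x ^ (n+α) := by
          rw [show n-1+α+1 = n+α by ring]; ring
  have hρnn : ∀ x ∈ Icc 0 t₀, 0 ≤ ρ x := by
    intro x hx
    rcases eq_or_lt_of_le hx.1 with h | h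
    · have : ρ x = 0 := by
        rw [hρdef]; simp only [← h]
        exact intervalIntegral.integral_same
      rw [this]
    · exact le_of_lt (hρpos x ⟨h, hx.2⟩)
  -- dichotomy from the ODE
  have hdiff : ∀ x ∈ Ioo 0 t₀, DifferentiableAt ℝ G x → HasDerivAt G (F x) x := by
    intro x hx hD
    have hGx : φ (deriv w x) = G x := rfl
    have h1 := hode x hx
    rw [hGx] at h1
    have h2 : deriv G x = F x := by
      rw [hFdef]
      simp only
      linarith
    exact h2 ▸ hD.hasDerivAt
  have hpin : ∀ x ∈ Ioo 0 t₀, ¬ DifferentiableAt ℝ G x → G x = A x := by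
    intro x hx hD
    have hGx : φ (deriv w x) = G x := rfl
    have h0 : deriv G x = 0 := deriv_zero_of_not_differentiableAt hD
    have h1 := hode x hx
    rw [hGx, h0] at h1
    have hx0 : x ≠ 0 := ne_of_gt hx.1
    have hxx : x ^ ((1:ℝ)+α) = x * x ^ α := by
      rw [Real.rpow_add hx.1, Real.rpow_one]
    rw [hAdef]
    simp only
    rw [hxx]
    field_simp at h1 ⊢
    nlinarith [h1]
  have hAd : ∀ x ∈ Ioo 0 t₀, HasDerivAt A (A' x) x := by
    intro x hx
    have h1 : HasDerivAt (fun y : ℝ => y ^ ((1:ℝ)+α)) (((1:ℝ)+α) * x ^ ((1:ℝ)+α-1)) x :=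
      Real.hasDerivAt_rpow_const (Or.inl (ne_of_gt hx.1))
    have h2 : HasDerivAt (fun y => w y ^ q) (deriv w x * q * w x ^ (q-1)) x :=
      (hwd x hx).rpow_const (Or.inl (ne_of_gt (hwpos' x hx)))
    have h4 := ((h1.mul h2).div_const (n-1)).neg
    exact h4
  have hθd : ∀ x ∈ Ioo 0 t₀, HasDerivAt θ (θ' x) x := by
    intro x hx
    have h5 : HasDerivAt (fun y : ℝ => y ^ (n-1)) ((n-1) * x ^ (n-1-1)) x :=
      Real.hasDerivAt_rpow_const (Or.inl (ne_of_gt hx.1))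
    exact (h5.mul (hAd x hx)).add (hρd x hx)
  have hA_cont : ContinuousOn A (Ioo 0 t₀) := by
    apply ContinuousOn.neg
    apply ContinuousOn.div_const
    apply ContinuousOn.mul
    · intro x hx
      exact (Real.continuousAt_rpow_const x _ (Or.inl (ne_of_gt hx.1))).continuousWithinAt
    · exact (hw_cont.mono Ioo_subset_Icc_self).rpow_const
        (fun x hx => Or.inl (ne_of_gt (hwpos' x hx)))
  have hA'_cont : ContinuousOn A' (Ioo 0 t₀) := by
    apply ContinuousOn.neg
    apply ContinuousOn.div_const
    apply ContinuousOn.add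
    · apply ContinuousOn.mul
      · apply ContinuousOn.mul continuousOn_const
        intro x hx
        exact (Real.continuousAt_rpow_const x _ (Or.inl (ne_of_gt hx.1))).continuousWithinAt
      · exact (hw_cont.mono Ioo_subset_Icc_self).rpow_const
          (fun x hx => Or.inl (ne_of_gt (hwpos' x hx)))
    · apply ContinuousOn.mul
      · intro x hx
        exact (Real.continuousAt_rpow_const x _ (Or.inl (ne_of_gt hx.1))).continuousWithinAt
      · apply ContinuousOn.mul (ContinuousOn.mul hdc continuousOn_const)
        exact (hw_cont.mono Ioo_subset_Icc_self).rpow_const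
          (fun x hx => Or.inl (ne_of_gt (hwpos' x hx)))
  have hθ'c : ContinuousOn θ' (Ioo 0 t₀) := by
    apply ContinuousOn.add
    apply ContinuousOn.add
    · apply ContinuousOn.mul _ hA_cont
      apply ContinuousOn.mul continuousOn_const
      intro x hx
      exact (Real.continuousAt_rpow_const x _ (Or.inl (ne_of_gt hx.1))).continuousWithinAt
    · apply ContinuousOn.mul _ hA'_cont
      intro x hx
      exact (Real.continuousAt_rpow_const x _ (Or.inl (ne_of_gt hx.1))).continuousWithinAt
    · apply ContinuousOn.mul
      · intro x hx
        exact (Real.continuousAt_rpow_const x _ (Or.inl (ne_of_gt hx.1))).continuousWithinAt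
      · exact (hw_cont.mono Ioo_subset_Icc_self).rpow_const
          (fun x hx => Or.inr (by linarith))
  have hFc : ContinuousOn F (Ioo 0 t₀) := by
    apply ContinuousOn.neg
    apply ContinuousOn.add
    · apply ContinuousOn.mul _ hG_cont
      exact continuousOn_const.div continuousOn_id (fun x hx => ne_of_gt hx.1)
    · apply ContinuousOn.mul
      · intro x hx
        exact (Real.continuousAt_rpow_const x _ (Or.inl (ne_of_gt hx.1))).continuousWithinAt
      · exact (hw_cont.mono Ioo_subset_Icc_self).rpow_const
          (fun x hx => Or.inr (by linarith))
  have hmd : ∀ x ∈ Ioo 0 t₀, DifferentiableAt ℝ G x → HasDerivAt m 0 x := by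
    intro x hx hD
    have h5 : HasDerivAt (fun y : ℝ => y ^ (n-1)) ((n-1) * x ^ (n-1-1)) x :=
      Real.hasDerivAt_rpow_const (Or.inl (ne_of_gt hx.1))
    have h6 := (h5.mul (hdiff x hx hD)).add (hρd x hx)
    have hcalc : ((n-1) * x ^ (n-1-1)) * G x + x ^ (n-1) * F x + x ^ (n-1+α) * w x ^ q = 0 := by
      rw [hFdef]
      simp only
      have k1 : x ^ (n-1-1) = x ^ (n-1) / x := by
        rw [show n-1-1 = (n-1) - 1 by ring, Real.rpow_sub hx.1, Real.rpow_one]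
      have k2 : x ^ (n-1+α) = x ^ (n-1) * x ^ α := Real.rpow_add hx.1 _ _
      rw [k1, k2]
      have hx0 : x ≠ 0 := ne_of_gt hx.1
      field_simp
      ring
    rw [← hcalc]
    exact h6
  have hm_cont : ContinuousOn m (Ioo 0 t₀) := by
    apply ContinuousOn.add _ (hρ_cont.mono Ioo_subset_Icc_self)
    apply ContinuousOn.mul _ hG_cont
    intro x hx
    exact (Real.continuousAt_rpow_const x _ (Or.inl (ne_of_gt hx.1))).continuousWithinAt
  -- the nondifferentiability set is null
  have keyN : ∀ c d : ℝ, 0 < c → d < t₀ → volume (N ∩ Ioo c d) = 0 := by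
    intro c d hc hd
    rcases le_or_gt d c with hdc | hcd
    · rw [Ioo_eq_empty (not_lt.2 hdc), inter_empty, measure_empty]
    have hIccsub : Icc c d ⊆ Ioo 0 t₀ :=
      fun x hx => ⟨lt_of_lt_of_le hc hx.1, lt_of_le_of_lt hx.2 hd⟩
    set E : Set ℝ := Icc c d ∩ {x | G x - A x = 0} with hEdef
    have hEclosed : IsClosed E := by
      apply ContinuousOn.preimage_isClosed_of_isClosed
        ((hG_cont.mono hIccsub).sub (hA_cont.mono hIccsub)) isClosed_Icc isClosed_singleton
    have hEm : MeasurableSet E := hEclosed.measurableSet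
    have hbes := Besicovitch.ae_tendsto_measure_inter_div_of_measurableSet volume hEm
    rw [MeasureTheory.ae_iff] at hbes
    apply measure_mono_null _ hbes
    intro x hx
    simp only [mem_setOf_eq]
    intro htend
    obtain ⟨hxN, hxIoo⟩ := hx
    have hxIoo0 : x ∈ Ioo 0 t₀ := hxN.1
    have hxE : x ∈ E := by
      refine ⟨Ioo_subset_Icc_self hxIoo, ?_⟩
      simp only [mem_setOf_eq]
      rw [hpin x hxIoo0 hxN.2, sub_self]
    rw [Set.indicator_of_mem hxE] at htend
    simp only [Pi.one_apply] at htend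
    obtain ⟨CF, hCF⟩ := isCompact_Icc.exists_bound_of_continuousOn (hFc.mono hIccsub)
    set δ := min (x - c) (d - x) with hδdef
    have hδ : 0 < δ := lt_min (by linarith [hxIoo.1]) (by linarith [hxIoo.2])
    have hsubδ : Icc (x - δ) (x + δ) ⊆ Icc c d := by
      intro y hy
      constructor
      · have := min_le_left (x - c) (d - x); have := hy.1; simp only [hδdef] at *; linarith [min_le_left (x-c) (d-x)]
      · have := hy.2; linarith [min_le_right (x-c) (d-x)]
    have hgder : HasDerivAt G (A' x) x := by
      apply gap_hasDerivAt (F := F) (C := CF) hEclosed hδ hxE htend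
        (fun y hy => by have := hy.2; simp only [mem_setOf_eq] at this; linarith [this])
        ?_ (hG_cont.mono (fun y hy => hIccsub (hsubδ hy)))
        ?_ (hAd x hxIoo0)
      · intro y hy hyE
        have hyIcc : y ∈ Icc c d := hsubδ hy
        have hyIoo : y ∈ Ioo 0 t₀ := hIccsub hyIcc
        apply hdiff y hyIoo
        by_contra hnd
        exact hyE ⟨hyIcc, by simp only [mem_setOf_eq]; rw [hpin y hyIoo hnd, sub_self]⟩
      · intro y hy
        have := hCF y (hsubδ hy)
        rw [Real.norm_eq_abs] at this
        exact this
    exact hxN.2 hgder.differentiableAt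
  have hNnull : volume N = 0 := by
    have hcover : N ⊆ ⋃ k : ℕ, (N ∩ Ioo (t₀/((k:ℝ)+3)) (t₀ - t₀/((k:ℝ)+3))) := by
      intro x hxN
      have hx := hxN.1
      set ε := min x (t₀ - x) with hεdef
      have hε : 0 < ε := lt_min hx.1 (by linarith [hx.2])
      obtain ⟨k, hk⟩ := exists_nat_gt (t₀/ε)
      rw [div_lt_iff₀ hε] at hk
      refine mem_iUnion.2 ⟨k, hxN, ?_, ?_⟩
      · have h1 : t₀/((k:ℝ)+3) < ε := by
          rw [div_lt_iff₀ (by positivity)]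
          nlinarith [hε]
        exact lt_of_lt_of_le h1 (min_le_left _ _)
      · have h1 : t₀/((k:ℝ)+3) < ε := by
          rw [div_lt_iff₀ (by positivity)]
          nlinarith [hε]
        have h2 := min_le_right x (t₀ - x)
        have := lt_of_lt_of_le h1 h2
        linarith
    apply measure_mono_null hcover
    apply measure_iUnion_null
    intro k
    apply keyN
    · positivity
    · have : 0 < t₀/((k:ℝ)+3) := by positivity
      linarith
  -- m is constant, hence 0
  have hconst : ∀ c d : ℝ, 0 < c → c ≤ d → d < t₀ → m c = m d := by
    intro c d hc hcd hd
    have hIccsub : Icc c d ⊆ Ioo 0 t₀ :=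
      fun x hx => ⟨lt_of_lt_of_le hc hx.1, lt_of_le_of_lt hx.2 hd⟩
    set S₁ : Set ℝ := Icc c d ∩ {x | DifferentiableAt ℝ G x} with hS₁def
    have hS₁m : MeasurableSet S₁ :=
      measurableSet_Icc.inter (measurableSet_of_differentiableAt ℝ G)
    have h1 : volume (m '' S₁) = 0 := by
      have h := image_volume_le (f := m) (f' := fun _ => (0:ℝ)) hS₁m
        (fun x hx => (hmd x (hIccsub hx.1) hx.2).hasDerivWithinAt)
        (K := 0) (fun x _ => by simp)
      simpa using h
    set Nset := N ∩ Ioo (c/2) ((d+t₀)/2) with hNsetdef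
    have hNn : volume Nset = 0 := keyN _ _ (by linarith) (by linarith)
    set H := toMeasurable volume Nset ∩ Icc c d with hHdef
    have hHm : MeasurableSet H := (measurableSet_toMeasurable _ _).inter measurableSet_Icc
    have hHnull : volume H = 0 := by
      apply le_antisymm _ zero_le
      calc volume H ≤ volume (toMeasurable volume Nset) := measure_mono inter_subset_left
        _ = volume Nset := measure_toMeasurable _
        _ = 0 := hNn
    obtain ⟨K, hK⟩ := isCompact_Icc.exists_bound_of_continuousOn (hθ'c.mono hIccsub)
    have h2 : volume (θ '' H) = 0 := by
      have h := image_volume_le hHm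
        (fun x hx => (hθd x (hIccsub hx.2)).hasDerivWithinAt)
        (K := K) (fun x hx => by
          have := hK x hx.2; rwa [Real.norm_eq_abs] at this)
      rw [hHnull, mul_zero] at h
      exact le_antisymm h zero_le
    have h3 : m '' (Icc c d) ⊆ m '' S₁ ∪ θ '' H := by
      rintro y ⟨x, hx, rfl⟩
      by_cases hD : DifferentiableAt ℝ G x
      · exact Or.inl ⟨x, ⟨hx, hD⟩, rfl⟩
      · have hxIoo : x ∈ Ioo 0 t₀ := hIccsub hx
        have hxH : x ∈ H := by
          refine ⟨subset_toMeasurable _ _ ⟨⟨hxIoo, hD⟩, ?_⟩, hx⟩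
          exact ⟨by linarith [hx.1], by linarith [hx.2]⟩
        have hmθ : m x = θ x := by
          rw [hmdef, hθdef]
          simp only
          rw [hpin x hxIoo hD]
        exact Or.inr ⟨x, hxH, hmθ.symm⟩
    have h4 : volume (m '' Icc c d) = 0 :=
      measure_mono_null h3 (measure_union_null h1 h2)
    by_contra hne
    rcases lt_or_gt_of_ne hne with hlt | hgt
    · have h5 := intermediate_value_Icc hcd (hm_cont.mono hIccsub)
      have h6 : volume (Icc (m c) (m d)) = 0 := measure_mono_null h5 h4
      rw [Real.volume_Icc] at h6
      have h7 := ENNReal.ofReal_eq_zero.1 h6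
      linarith
    · have h5 := intermediate_value_Icc' hcd (hm_cont.mono hIccsub)
      have h6 : volume (Icc (m d) (m c)) = 0 := measure_mono_null h5 h4
      rw [Real.volume_Icc] at h6
      have h7 := ENNReal.ofReal_eq_zero.1 h6
      linarith
  obtain ⟨Ci, hCi0, hCi⟩ : ∃ Ci : ℝ, 0 ≤ Ci ∧
      ∀ s ∈ Icc 0 t₀, |s ^ (n-1+α) * w s ^ q| ≤ Ci := by
    obtain ⟨C0, hC0⟩ := isCompact_Icc.exists_bound_of_continuousOn hInt_cont
    refine ⟨max C0 0, le_max_right _ _, fun s hs => ?_⟩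
    exact le_trans (by have := hC0 s hs; rwa [Real.norm_eq_abs] at this) (le_max_left _ _)
  have hρabs : ∀ x ∈ Ioo 0 t₀, |ρ x| ≤ Ci * x := by
    intro x hx
    have h := intervalIntegral.norm_integral_le_of_norm_le_const
      (C := Ci) (f := fun s => s ^ (n-1+α) * w s ^ q) (a := 0) (b := x) ?_
    · rw [Real.norm_eq_abs] at h
      calc |ρ x| ≤ Ci * |x - 0| := h
        _ = Ci * x := by rw [sub_zero, abs_of_pos hx.1]
    · intro s hs
      rw [Set.uIoc_of_le hx.1.le] at hs
      rw [Real.norm_eq_abs]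
      exact hCi s ⟨hs.1.le, le_trans hs.2 hx.2.le⟩
  have hmlim : Tendsto m (nhdsWithin 0 (Ioi 0)) (nhds 0) := by
    have hb : ∀ᶠ x in nhdsWithin 0 (Ioi 0), ‖m x‖ ≤ Cg * x ^ (n-1) + Ci * x := by
      filter_upwards [Ioo_mem_nhdsGT_of_mem (by constructor <;> [exact le_rfl; exact ht₀] :
        (0:ℝ) ∈ Ico 0 t₀)] with x hx
      rw [hmdef, Real.norm_eq_abs]
      simp only
      calc |x ^ (n-1) * G x + ρ x| ≤ |x ^ (n-1) * G x| + |ρ x| := abs_add_le _ _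
        _ ≤ Cg * x ^ (n-1) + Ci * x := by
            apply add_le_add _ (hρabs x hx)
            rw [abs_mul, abs_of_nonneg (Real.rpow_nonneg hx.1.le _), mul_comm]
            exact mul_le_mul_of_nonneg_right (hCg x hx) (Real.rpow_nonneg hx.1.le _)
    apply squeeze_zero_norm' hb
    have ht1 : Tendsto (fun x : ℝ => Cg * x ^ (n-1)) (nhdsWithin 0 (Ioi 0)) (nhds 0) := by
      have h := (Real.continuousAt_rpow_const 0 (n-1) (Or.inr (by linarith))).tendsto
      rw [Real.zero_rpow hn1] at h
      have h2 := (h.mono_left (nhdsWithin_le_nhds (s := Ioi (0:ℝ)))).const_mul Cg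
      simpa using h2
    have ht2 : Tendsto (fun x : ℝ => Ci * x) (nhdsWithin 0 (Ioi 0)) (nhds 0) := by
      have h2 : Tendsto (fun x : ℝ => x) (nhds 0) (nhds 0) := tendsto_id
      have h3 := (h2.const_mul Ci).mono_left (nhdsWithin_le_nhds (s := Ioi (0:ℝ)))
      simpa using h3
    simpa using ht1.add ht2
  have hm0 : ∀ x ∈ Ioo 0 t₀, m x = 0 := by
    have hval : ∀ x ∈ Ioo 0 t₀, ∀ y ∈ Ioo 0 t₀, m x = m y := by
      intro x hx y hy
      rcases le_total x y with h | h
      · exact hconst x y hx.1 h hy.2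
      · exact (hconst y x hy.1 h hx.2).symm
    intro x hx
    have hev : ∀ᶠ s in nhdsWithin 0 (Ioi 0), m s = m x := by
      filter_upwards [Ioo_mem_nhdsGT_of_mem (by constructor <;> [exact le_rfl; exact ht₀] :
        (0:ℝ) ∈ Ico 0 t₀)] with s hs
      exact hval s hs x hx
    have h1 : Tendsto m (nhdsWithin 0 (Ioi 0)) (nhds (m x)) :=
      Tendsto.congr' (by filter_upwards [hev] with s hs; exact hs.symm) tendsto_const_nhds
    exact tendsto_nhds_unique h1 hmlim
  -- explicit formulas
  have hGexp : ∀ x ∈ Ioo 0 t₀, G x = -(ρ x / x ^ (n-1)) := by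
    intro x hx
    have h1 := hm0 x hx
    rw [hmdef] at h1
    simp only at h1
    have hxp : (0:ℝ) < x ^ (n-1) := Real.rpow_pos_of_pos hx.1 _
    field_simp
    linarith [h1]
  have hWexp : ∀ x ∈ Ioo 0 t₀, deriv w x = -(ρ x ^ e * x ^ ((1-n) * e)) := by
    intro x hx
    have hxp : (0:ℝ) < x ^ (n-1) := Real.rpow_pos_of_pos hx.1 _
    have hXpos : 0 < ρ x / x ^ (n-1) := div_pos (hρpos x ⟨hx.1, hx.2.le⟩) hxp
    have h1 : deriv w x * |deriv w x| ^ (p-2) = -(ρ x / x ^ (n-1)) := by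
      have h2 := hGexp x hx
      rw [hGdef] at h2
      simp only at h2
      rw [hφ] at h2
      exact h2
    have h3 := phi_inv hp hXpos h1
    rw [h3, hedef]
    congr 1
    rw [Real.div_rpow (hρnn x ⟨hx.1.le, hx.2.le⟩) (le_of_lt hxp)]
    rw [← Real.rpow_mul hx.1.le]
    rw [show (1-n) * (p-1)⁻¹ = -((n-1) * (p-1)⁻¹) by ring]
    rw [Real.rpow_neg hx.1.le, div_eq_mul_inv]
  -- Pohozhaev
  have hKneg : (n*p + p*α)/(q+1) - (n-p) < 0 := by
    have hnp : (0:ℝ) < n - p := by linarith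
    rw [gt_iff_lt, div_lt_iff₀ hnp] at hq'
    rw [sub_neg, div_lt_iff₀ hq1]
    nlinarith
  have hPd : ∀ x ∈ Ioo 0 t₀,
      HasDerivAt P (((n*p + p*α)/(q+1) - (n-p)) * (x ^ (n-1+α) * w x ^ (q+1))) x := by
    intro x hx
    have hρpos' : 0 < ρ x := hρpos x ⟨hx.1, hx.2.le⟩
    have hwpos : 0 < w x := hwpos' x hx
    have hρx := hρd x hx
    have hwx := hwd x hx
    have t1 : HasDerivAt (fun y => ρ y ^ (p*e))
        (x ^ (n-1+α) * w x ^ q * (p*e) * ρ x ^ (p*e-1)) x :=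
      hρx.rpow_const (Or.inl (ne_of_gt hρpos'))
    have t2 : HasDerivAt (fun y : ℝ => y ^ (n-(n-1)*(p*e)))
        ((n-(n-1)*(p*e)) * x ^ (n-(n-1)*(p*e)-1)) x :=
      Real.hasDerivAt_rpow_const (Or.inl (ne_of_gt hx.1))
    have t4 : HasDerivAt (fun y : ℝ => y ^ (n+α)) ((n+α) * x ^ (n+α-1)) x :=
      Real.hasDerivAt_rpow_const (Or.inl (ne_of_gt hx.1))
    have t5 : HasDerivAt (fun y => w y ^ (q+1))
        (deriv w x * (q+1) * w x ^ (q+1-1)) x :=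
      hwx.rpow_const (Or.inl (ne_of_gt hwpos))
    have total := (((t1.mul t2).const_mul (p-1)).add
      ((t4.mul t5).const_mul (p/(q+1)))).sub ((hρx.mul hwx).const_mul (n-p))
    have hepP : e * (p-1) = 1 := hep
    have hq1c : (q+1) * (q+1)⁻¹ = 1 := mul_inv_cancel₀ (ne_of_gt hq1)
    have k2 : ρ x ^ (p*e-1) = ρ x ^ e := by
      congr 1
      linear_combination hepP
    have k3 : w x ^ (q+1-1) = w x ^ q := by
      congr 1
      ring
    have k5 : x ^ (n-(n-1)*(p*e)-1) = x ^ ((1-n)*e) := by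
      congr 1
      linear_combination (-(n-1)) * hepP
    have k6 : x ^ (n+α-1) = x ^ (n-1+α) := by
      congr 1
      ring
    have hK1 : x ^ (n-1+α) * x ^ (n-(n-1)*(p*e)) = x ^ (n+α) * x ^ ((1-n)*e) := by
      rw [← Real.rpow_add hx.1, ← Real.rpow_add hx.1]
      congr 1
      linear_combination (-(n-1)) * hepP
    have hK4 : ρ x * ρ x ^ e = ρ x ^ (p*e) := by
      rw [show p*e = 1 + e by linear_combination hepP, Real.rpow_add hρpos', Real.rpow_one]
    have hK7 : w x ^ q * w x = w x ^ (q+1) := by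
      rw [Real.rpow_add hwpos, Real.rpow_one]
    have hEq : (p-1) * ((x ^ (n-1+α) * w x ^ q * (p*e) * ρ x ^ (p*e-1)) * x ^ (n-(n-1)*(p*e))
          + ρ x ^ (p*e) * ((n-(n-1)*(p*e)) * x ^ (n-(n-1)*(p*e)-1)))
        + (p/(q+1)) * ((n+α) * x ^ (n+α-1) * w x ^ (q+1)
          + x ^ (n+α) * (deriv w x * (q+1) * w x ^ (q+1-1)))
        - (n-p) * ((x ^ (n-1+α) * w x ^ q) * w x + ρ x * deriv w x)
        = ((n*p + p*α)/(q+1) - (n-p)) * (x ^ (n-1+α) * w x ^ (q+1)) := by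
      rw [hWexp x hx, k2, k3, k5, k6]
      linear_combination (p * (w x ^ q) * (ρ x ^ e)) * hK1
        + ((n-p) * (x ^ ((1-n)*e))) * hK4
        + (-((n-p) * (x ^ (n-1+α)))) * hK7
        + (p * (x ^ (n-1+α)) * (w x ^ q) * (ρ x ^ e) * (x ^ (n-(n-1)*(p*e)))
            - (n-1)*p*(ρ x ^ (p*e))*(x ^ ((1-n)*e))) * hepP
        + (-(p * (x ^ (n+α)) * (ρ x ^ e) * (x ^ ((1-n)*e)) * (w x ^ q))) * hq1c
    rw [← hEq]
    exact total
  have hρ_contI : ContinuousOn ρ (Ioc 0 t₀) := hρ_cont.mono Ioc_subset_Icc_self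
  have hw_contI : ContinuousOn w (Ioc 0 t₀) := hw_cont.mono Ioc_subset_Icc_self
  have hP_cont : ContinuousOn P (Ioc 0 t₀) := by
    apply ContinuousOn.sub
    apply ContinuousOn.add
    · apply ContinuousOn.mul continuousOn_const
      apply ContinuousOn.mul
      · exact hρ_contI.rpow_const (fun x hx => Or.inr (by positivity))
      · intro x hx
        exact (Real.continuousAt_rpow_const x _ (Or.inl (ne_of_gt hx.1))).continuousWithinAt
    · apply ContinuousOn.mul continuousOn_const
      apply ContinuousOn.mul
      · intro x hx
        exact (Real.continuousAt_rpow_const x _ (Or.inl (ne_of_gt hx.1))).continuousWithinAt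
      · exact hw_contI.rpow_const (fun x hx => Or.inr (by linarith))
    · exact continuousOn_const.mul (hρ_contI.mul hw_contI)
  have hPanti : ∀ s ∈ Ioo 0 t₀, P t₀ < P s := by
    intro s hs
    have hsub : Icc s t₀ ⊆ Ioc 0 t₀ := fun x hx => ⟨lt_of_lt_of_le hs.1 hx.1, hx.2⟩
    have h := strictAntiOn_of_deriv_neg (convex_Icc s t₀) (hP_cont.mono hsub) ?_
    · exact h ⟨le_rfl, hs.2.le⟩ ⟨hs.2.le, le_rfl⟩ hs.2
    · intro x hx
      rw [interior_Icc] at hx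
      have hxIoo : x ∈ Ioo 0 t₀ := ⟨lt_trans hs.1 hx.1, hx.2⟩
      rw [(hPd x hxIoo).deriv]
      apply mul_neg_of_neg_of_pos hKneg
      apply mul_pos (Real.rpow_pos_of_pos hxIoo.1 _)
      exact Real.rpow_pos_of_pos (hwpos' x hxIoo) _
  have htz : ∀ c E : ℝ, 0 < E → Tendsto (fun x : ℝ => c * x ^ E) (nhdsWithin 0 (Ioi 0)) (nhds 0) := by
    intro c E hE
    have h := (Real.continuousAt_rpow_const 0 E (Or.inr hE.le)).tendsto
    rw [Real.zero_rpow (ne_of_gt hE)] at h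
    have h2 := (h.mono_left (nhdsWithin_le_nhds (s := Ioi (0:ℝ)))).const_mul c
    simpa using h2
  have hPlim : Tendsto P (nhdsWithin 0 (Ioi 0)) (nhds 0) := by
    set Cq : ℝ := Cw ^ q / (n+α) with hCqdef
    have hCq0 : 0 ≤ Cq := by
      rw [hCqdef]; positivity
    set E1 : ℝ := (n+α)*(p*e) + (n-(n-1)*(p*e)) with hE1def
    have hpe : 0 < p * e := by positivity
    have hE1 : 0 < E1 := by
      rw [hE1def]
      nlinarith [hpe, hα, mul_nonneg (le_of_lt hpe) hα]
    set C1 : ℝ := (p-1) * Cq ^ (p*e) with hC1def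
    set C2 : ℝ := (p/(q+1)) * Cw ^ (q+1) with hC2def
    set C3 : ℝ := (n-p) * Cq * Cw with hC3def
    have hb : ∀ᶠ x in nhdsWithin 0 (Ioi 0),
        ‖P x‖ ≤ C1 * x ^ E1 + C2 * x ^ (n+α) + C3 * x ^ (n+α) := by
      filter_upwards [Ioo_mem_nhdsGT_of_mem (by constructor <;> [exact le_rfl; exact ht₀] :
        (0:ℝ) ∈ Ico 0 t₀)] with x hx
      have hxIcc : x ∈ Icc 0 t₀ := ⟨hx.1.le, hx.2.le⟩
      have hρn : 0 ≤ ρ x := hρnn x hxIcc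
      have hwn : 0 ≤ w x := hwnn x hxIcc
      have e1 : ρ x ^ (p*e) ≤ Cq ^ (p*e) * x ^ ((n+α)*(p*e)) := by
        have h1 := Real.rpow_le_rpow hρn (hρle x hxIcc) hpe.le
        rwa [Real.mul_rpow hCq0 (Real.rpow_nonneg hx.1.le _),
          ← Real.rpow_mul hx.1.le] at h1
      have e2 : w x ^ (q+1) ≤ Cw ^ (q+1) :=
        Real.rpow_le_rpow hwn (hCw x hxIcc) (by linarith)
      have e3 : w x ^ q ≤ Cw ^ q := Real.rpow_le_rpow hwn (hCw x hxIcc) (by linarith)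
      rw [hPdef, Real.norm_eq_abs]
      simp only
      have hT1 : |(p-1) * (ρ x ^ (p*e) * x ^ (n-(n-1)*(p*e)))| ≤ C1 * x ^ E1 := by
        have hnn : (0:ℝ) ≤ (p-1) * (ρ x ^ (p*e) * x ^ (n-(n-1)*(p*e))) :=
          mul_nonneg (by linarith)
            (mul_nonneg (Real.rpow_nonneg hρn _) (Real.rpow_nonneg hx.1.le _))
        rw [abs_of_nonneg hnn]
        calc (p-1) * (ρ x ^ (p*e) * x ^ (n-(n-1)*(p*e)))
            ≤ (p-1) * ((Cq ^ (p*e) * x ^ ((n+α)*(p*e))) * x ^ (n-(n-1)*(p*e))) := by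
              apply mul_le_mul_of_nonneg_left _ (by linarith)
              exact mul_le_mul_of_nonneg_right e1 (Real.rpow_nonneg hx.1.le _)
          _ = C1 * x ^ E1 := by
              rw [hC1def, hE1def, Real.rpow_add hx.1]; ring
      have hT2 : |(p/(q+1)) * (x ^ (n+α) * w x ^ (q+1))| ≤ C2 * x ^ (n+α) := by
        have hpq : (0:ℝ) ≤ p/(q+1) := by positivity
        have hnn : (0:ℝ) ≤ (p/(q+1)) * (x ^ (n+α) * w x ^ (q+1)) :=
          mul_nonneg hpq
            (mul_nonneg (Real.rpow_nonneg hx.1.le _) (Real.rpow_nonneg hwn _))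
        rw [abs_of_nonneg hnn]
        calc (p/(q+1)) * (x ^ (n+α) * w x ^ (q+1))
            ≤ (p/(q+1)) * (x ^ (n+α) * Cw ^ (q+1)) := by
              apply mul_le_mul_of_nonneg_left _ hpq
              exact mul_le_mul_of_nonneg_left e2 (Real.rpow_nonneg hx.1.le _)
          _ = C2 * x ^ (n+α) := by rw [hC2def]; ring
      have hT3 : |(n-p) * (ρ x * w x)| ≤ C3 * x ^ (n+α) := by
        have hnn : (0:ℝ) ≤ (n-p) * (ρ x * w x) :=
          mul_nonneg (by linarith) (mul_nonneg hρn hwn)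
        rw [abs_of_nonneg hnn]
        calc (n-p) * (ρ x * w x)
            ≤ (n-p) * ((Cq * x ^ (n+α)) * Cw) := by
              apply mul_le_mul_of_nonneg_left _ (by linarith)
              exact mul_le_mul (hρle x hxIcc) (hCw x hxIcc) hwn
                (mul_nonneg hCq0 (Real.rpow_nonneg hx.1.le _))
          _ = C3 * x ^ (n+α) := by rw [hC3def]; ring
      calc |(p-1) * (ρ x ^ (p*e) * x ^ (n-(n-1)*(p*e))) + (p/(q+1)) * (x ^ (n+α) * w x ^ (q+1))
            - (n-p) * (ρ x * w x)|
          ≤ |(p-1) * (ρ x ^ (p*e) * x ^ (n-(n-1)*(p*e))) + (p/(q+1)) * (x ^ (n+α) * w x ^ (q+1))|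
            + |(n-p) * (ρ x * w x)| := by
            rw [sub_eq_add_neg]
            exact (abs_add_le _ _).trans (by rw [abs_neg])
        _ ≤ |(p-1) * (ρ x ^ (p*e) * x ^ (n-(n-1)*(p*e)))| + |(p/(q+1)) * (x ^ (n+α) * w x ^ (q+1))|
            + |(n-p) * (ρ x * w x)| := by
            exact add_le_add (abs_add_le _ _) le_rfl
        _ ≤ C1 * x ^ E1 + C2 * x ^ (n+α) + C3 * x ^ (n+α) :=
            add_le_add (add_le_add hT1 hT2) hT3
    apply squeeze_zero_norm' hb
    have h1 := (htz C1 E1 hE1).add ((htz C2 (n+α) (by linarith)).add (htz C3 (n+α) (by linarith)))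
    simp only [add_zero] at h1
    convert h1 using 2 with x
    ring
  have hPt₀ : 0 < P t₀ := by
    rw [hPdef]
    simp only
    rw [hzero]
    rw [Real.zero_rpow (by intro h'; linarith [h'] : q + 1 ≠ 0)]
    rw [mul_zero, mul_zero, mul_zero, mul_zero, add_zero, sub_zero]
    apply mul_pos h0p1
    apply mul_pos
    · exact Real.rpow_pos_of_pos (hρpos t₀ ⟨ht₀, le_rfl⟩) _
    · exact Real.rpow_pos_of_pos ht₀ _
  -- conclusion
  have hPle : P (t₀/2) ≤ 0 := by
    have hev : ∀ᶠ s in nhdsWithin 0 (Ioi 0), P (t₀/2) ≤ P s := by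
      filter_upwards [Ioo_mem_nhdsGT_of_mem (by constructor <;> [exact le_rfl; linarith] :
        (0:ℝ) ∈ Ico 0 (t₀/2))] with s hs
      have hs2 : s ∈ Ioo 0 t₀ := ⟨hs.1, by linarith [hs.2]⟩
      have hsub : Icc s t₀ ⊆ Ioc 0 t₀ := fun x hx => ⟨lt_of_lt_of_le hs2.1 hx.1, hx.2⟩
      have h := strictAntiOn_of_deriv_neg (convex_Icc s t₀) (hP_cont.mono hsub) ?_
      · have h2 := h ⟨hs.2.le, by linarith⟩ (⟨by linarith [hs.2], le_rfl⟩ : t₀ ∈ Icc s t₀)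
          (by linarith : t₀/2 < t₀)
        have h3 := h (⟨le_rfl, by linarith [hs.2]⟩ : s ∈ Icc s t₀) ⟨hs.2.le, by linarith⟩ hs.2
        linarith
      · intro x hx
        rw [interior_Icc] at hx
        have hxIoo : x ∈ Ioo 0 t₀ := ⟨lt_trans hs2.1 hx.1, hx.2⟩
        rw [(hPd x hxIoo).deriv]
        apply mul_neg_of_neg_of_pos hKneg
        apply mul_pos (Real.rpow_pos_of_pos hxIoo.1 _)
        exact Real.rpow_pos_of_pos (hwpos' x hxIoo) _
    exact ge_of_tendsto hPlim hev
  have h2 : t₀/2 ∈ Ioo 0 t₀ := by constructor <;> linarith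
  have h3 := hPanti (t₀/2) h2
  exact absurd (lt_of_lt_of_le (lt_trans hPt₀ h3) hPle) (lt_irrefl 0)
end

section
/- Let w solve (φ(w'))' + ((n−1)/t)φ(w') + t^α w^q = 0 with w(0)=1, w'(0)=0, and suppose w(t) > 0 for all t ≥ 0. Then w is strictly decreasing on (0,∞) and lim_{t→∞} w(t) = 0. -/
open Real Set Filter Topology

private lemma aux_slope {f : ℝ → ℝ} {T u : ℝ} (hTu : T < u)
    (hd : DifferentiableAt ℝ f u) (h : ∀ s ∈ Ioo T u, f s ≤ f u) :
    0 ≤ deriv f u := by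
  have ht : Tendsto (slope f u) (𝓝[<] u) (𝓝 (deriv f u)) :=
    (hasDerivAt_iff_tendsto_slope.mp hd.hasDerivAt).mono_left
      (nhdsWithin_mono u (fun x hx => mem_compl_singleton_iff.mpr (ne_of_lt hx)))
  refine ge_of_tendsto ht ?_
  filter_upwards [Ioo_mem_nhdsLT_of_mem (⟨hTu, le_rfl⟩ : u ∈ Ioc T u)] with s hs
  rw [slope_def_field]
  exact div_nonneg_of_nonpos (by linarith [h s hs]) (by linarith [hs.2])

private lemma aux_decay {f : ℝ → ℝ} {T c : ℝ} (hc : 0 < c)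
    (hfc : ContinuousOn f (Ici T)) (hfd : ∀ t, T < t → DifferentiableAt ℝ f t)
    (hder : ∀ t, T < t → deriv f t ≤ -c) (hnn : ∀ t, T ≤ t → 0 ≤ f t) : False := by
  have hant : AntitoneOn (fun s => f s + c * s) (Ici T) := by
    apply antitoneOn_of_deriv_nonpos (convex_Ici T)
    · exact hfc.add ((continuous_const.mul continuous_id).continuousOn)
    · rw [interior_Ici]
      exact fun t ht => ((hfd t ht).add ((differentiableAt_const _).mul differentiableAt_id)).differentiableWithinAt
    · rw [interior_Ici]
      intro t ht
      have hD : HasDerivAt (fun s => f s + c * s) (deriv f t + c * 1) t :=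
        (hfd t ht).hasDerivAt.add ((hasDerivAt_id t).const_mul c)
      rw [hD.deriv]
      linarith [hder t ht]
  set t3 := T + f T / c + 1 with ht3
  have h0 : 0 ≤ f T / c := div_nonneg (hnn T le_rfl) hc.le
  have hT3 : T ≤ t3 := by rw [ht3]; linarith
  have h1 : f t3 + c * t3 ≤ f T + c * T := hant self_mem_Ici hT3 hT3
  have h2 : c * (f T / c) = f T := mul_div_cancel₀ _ (ne_of_gt hc)
  have h3 := hnn t3 hT3
  rw [ht3] at h1
  nlinarith

private lemma aux_first {f : ℝ → ℝ} {T t1 : ℝ} (h1 : T < t1) (hc : ContinuousOn f (Icc T t1))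
    (hfT : f T < 0) (hft1 : 0 ≤ f t1) :
    ∃ u, (T < u ∧ u ≤ t1) ∧ 0 ≤ f u ∧ ∀ s, T ≤ s → s < u → f s < 0 := by
  set S : Set ℝ := Icc T t1 ∩ f ⁻¹' (Ici 0) with hS
  have hclosed : IsClosed S := hc.preimage_isClosed_of_isClosed isClosed_Icc isClosed_Ici
  have hne : S.Nonempty := ⟨t1, ⟨h1.le, le_rfl⟩, hft1⟩
  have hbdd : BddBelow S := ⟨T, fun x hx => hx.1.1⟩
  have hmem := hclosed.csInf_mem hne hbdd
  obtain ⟨⟨hTu, hut1⟩, hfu⟩ := hmem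
  have hTu' : T < sInf S := lt_of_le_of_ne hTu (by
    intro h; rw [← h] at hfu; exact absurd hfu (not_le.2 hfT))
  refine ⟨sInf S, ⟨hTu', hut1⟩, hfu, fun s hTs hsu => ?_⟩
  by_contra hge
  push_neg at hge
  have : sInf S ≤ s := csInf_le hbdd ⟨⟨hTs, hsu.le.trans hut1⟩, hge⟩
  linarith

set_option maxHeartbeats 1000000 in
/-- A globally positive solution of `(φ(w'))' + ((n−1)/t)φ(w') + t^α w^q = 0`
with `w(0)=1`, `w'(0)=0` is strictly decreasing on `(0,∞)` and tends to `0`. -/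
theorem stmt_5 (p q α n : ℝ) (hp : 1 < p) (hq : 1 < q) (hα : 0 ≤ α) (hn : 1 ≤ n)
    (φ : ℝ → ℝ) (hφ : ∀ v, φ v = v * |v| ^ (p - 2))
    (w : ℝ → ℝ) (hw : ContDiffOn ℝ 1 w (Ici 0))
    (hode : ∀ t > (0:ℝ),
      deriv (fun s => φ (deriv w s)) t + ((n - 1) / t) * φ (deriv w t)
        + t ^ α * (w t) ^ q = 0)
    (hw0 : w 0 = 1) (hw0' : deriv w 0 = 0)
    (hpos : ∀ t ≥ (0:ℝ), 0 < w t) :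
    StrictAntiOn w (Ioi 0) ∧ Tendsto w atTop (nhds 0) := by
  have hp1 : (0:ℝ) < p - 1 := by linarith
  -- basic φ facts
  have hφ0 : φ 0 = 0 := by rw [hφ 0, zero_mul]
  have hφpos : ∀ v : ℝ, 0 < v → φ v = v ^ (p - 1) := by
    intro v hv
    rw [hφ v, abs_of_pos hv, show p - 1 = (p-2) + 1 by ring, Real.rpow_add_one hv.ne']
    ring
  have hφneg : ∀ v : ℝ, v < 0 → φ v = -((-v) ^ (p - 1)) := by
    intro v hv
    rw [hφ v, abs_of_neg hv, show p - 1 = (p-2) + 1 by ring,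
      Real.rpow_add_one (by linarith : -v ≠ 0)]
    ring
  have hφm : StrictMono φ := by
    intro a b hab
    rcases lt_trichotomy b 0 with hb | hb | hb
    · rw [hφneg a (hab.trans hb), hφneg b hb]
      have h2 : (-b) ^ (p-1) < (-a) ^ (p-1) :=
        Real.rpow_lt_rpow (by linarith) (by linarith) hp1
      linarith
    · rw [hb, hφ0, hφneg a (hb ▸ hab)]
      have := Real.rpow_pos_of_pos (by linarith [hb ▸ hab] : (0:ℝ) < -a) (p-1)
      linarith
    · rcases lt_trichotomy a 0 with ha | ha | ha
      · rw [hφneg a ha, hφpos b hb]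
        have h1 := Real.rpow_pos_of_pos (by linarith : (0:ℝ) < -a) (p-1)
        have h2 := Real.rpow_pos_of_pos hb (p-1)
        linarith
      · rw [ha, hφ0, hφpos b hb]
        exact Real.rpow_pos_of_pos hb _
      · rw [hφpos a ha, hφpos b hb]
        exact Real.rpow_lt_rpow ha.le hab hp1
  have habsφ : ∀ v : ℝ, |φ v| = |v| ^ (p - 1) := by
    intro v
    rcases eq_or_ne v 0 with rfl | hv
    · rw [hφ0, abs_zero, Real.zero_rpow (ne_of_gt hp1)]
    · rw [hφ v, abs_mul, abs_of_nonneg (Real.rpow_nonneg (abs_nonneg v) (p-2)),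
        show p - 1 = (p-2) + 1 by ring, Real.rpow_add_one (abs_ne_zero.2 hv)]
      ring
  have hφcont : Continuous φ := by
    rw [continuous_iff_continuousAt]
    intro v
    rcases eq_or_ne v 0 with rfl | hv
    · have h1 : Tendsto (fun x : ℝ => |x| ^ (p-1)) (𝓝 0) (𝓝 0) := by
        have h2 := (Real.continuousAt_rpow_const 0 (p-1) (Or.inr hp1.le)).tendsto
        rw [Real.zero_rpow (ne_of_gt hp1)] at h2
        exact h2.comp (continuous_abs.tendsto' 0 0 abs_zero)
      have : Tendsto φ (𝓝 0) (𝓝 0) :=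
        squeeze_zero_norm' (Eventually.of_forall fun x => by
          rw [Real.norm_eq_abs, habsφ x]) h1
      rwa [ContinuousAt, hφ0]
    · have h1 : ContinuousAt (fun x : ℝ => x * |x| ^ (p-2)) v :=
        continuousAt_id.mul
          ((Real.continuousAt_rpow_const |v| (p-2) (Or.inl (abs_ne_zero.2 hv))).comp
            continuous_abs.continuousAt)
      have hφfun : φ = fun x : ℝ => x * |x| ^ (p-2) := funext hφ
      rw [hφfun]
      exact h1
  -- facts about w
  have hwc : ContinuousOn w (Ici 0) := hw.continuousOn
  have hwd : ∀ t : ℝ, 0 < t → DifferentiableAt ℝ w t := fun t ht =>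
    ((hw.differentiableOn one_ne_zero) t ht.le).differentiableAt (Ici_mem_nhds ht)
  have hDW : ContinuousOn (derivWithin w (Ici 0)) (Ici 0) :=
    hw.continuousOn_derivWithin (uniqueDiffOn_Ici 0) le_rfl
  have hDeq : ∀ t : ℝ, 0 < t → derivWithin w (Ici 0) t = deriv w t := fun t ht =>
    derivWithin_of_mem_nhds (Ici_mem_nhds ht)
  have hDc : ContinuousOn (deriv w) (Ioi 0) :=
    (hDW.mono Ioi_subset_Ici_self).congr fun t ht => (hDeq t ht).symm
  set G : ℝ → ℝ := fun s => φ (deriv w s) with hGdef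
  have hGt : ∀ t, φ (deriv w t) = G t := fun t => rfl
  simp only [hGt] at hode
  have hGc : ContinuousOn G (Ioi 0) := hφcont.comp_continuousOn hDc
  have hGat : ∀ t : ℝ, 0 < t → ContinuousAt G t := fun t ht =>
    hGc.continuousAt (Ioi_mem_nhds ht)
  have hwq : ∀ t : ℝ, 0 ≤ t → 0 < w t ^ q := fun t ht => Real.rpow_pos_of_pos (hpos t ht) q
  have htα : ∀ t : ℝ, 0 < t → (0:ℝ) < t ^ α := fun t ht => Real.rpow_pos_of_pos ht α
  -- dichotomy at each point
  have hdich : ∀ t : ℝ, 0 < t →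
      (DifferentiableAt ℝ G t ∧ deriv G t = -(((n-1)/t) * G t) - t ^ α * w t ^ q) ∨
      (((n-1)/t) * G t = -(t ^ α * w t ^ q)) := by
    intro t ht
    by_cases hd : DifferentiableAt ℝ G t
    · left
      exact ⟨hd, by have := hode t ht; linarith⟩
    · right
      have h0 : deriv G t = 0 := deriv_zero_of_not_differentiableAt hd
      have := hode t ht
      rw [h0] at this
      linarith
  -- negativity propagates forward
  have hprop : ∀ T : ℝ, 0 < T → G T < 0 → ∀ t, T ≤ t → G t < 0 := by
    intro T hT hGT
    by_contra hcon
    push_neg at hcon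
    obtain ⟨t1, hTt1, ht1⟩ := hcon
    have hTlt : T < t1 := lt_of_le_of_ne hTt1 (by rintro rfl; linarith)
    obtain ⟨u, ⟨hTu, hut1⟩, hGu, hmin⟩ := aux_first hTlt
      (hGc.mono (fun s hs => lt_of_lt_of_le hT hs.1)) hGT ht1
    have hu0 : 0 < u := hT.trans hTu
    have hα1 := mul_pos (htα u hu0) (hwq u hu0.le)
    have h1 : 0 ≤ ((n-1)/u) * G u := mul_nonneg (div_nonneg (by linarith) hu0.le) hGu
    rcases hdich u hu0 with ⟨hd, hder⟩ | heq
    · have h0 : 0 ≤ deriv G u :=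
        aux_slope hTu hd (fun s hs => (hmin s hs.1.le hs.2).le.trans hGu)
      rw [hder] at h0
      linarith
    · linarith
  -- Part 1: G < 0 everywhere on (0,∞)
  have hGneg : ∀ t : ℝ, 0 < t → G t < 0 := by
    by_contra hcon
    push_neg at hcon
    obtain ⟨t0, ht0, hGt0⟩ := hcon
    have hA : ∀ s : ℝ, 0 < s → s ≤ t0 → 0 ≤ G s := by
      intro s hs hst
      by_contra hneg
      push_neg at hneg
      exact absurd (hprop s hs hneg t0 hst) (not_lt.2 hGt0)
    have hwd0 : ∀ s : ℝ, 0 < s → s ≤ t0 → 0 ≤ deriv w s := by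
      intro s hs hst
      have h1 := hA s hs hst
      by_contra hneg
      push_neg at hneg
      have h2 : φ (deriv w s) < φ 0 := hφm hneg
      rw [hφ0] at h2
      exact absurd h1 (not_le.2 h2)
    have hmono : MonotoneOn w (Icc 0 t0) := by
      apply monotoneOn_of_deriv_nonneg (convex_Icc 0 t0) (hwc.mono Icc_subset_Ici_self)
      · rw [interior_Icc]
        exact fun t ht => (hwd t ht.1).differentiableWithinAt
      · rw [interior_Icc]
        exact fun t ht => hwd0 t ht.1 ht.2.le
    have hw1 : ∀ s : ℝ, 0 ≤ s → s ≤ t0 → 1 ≤ w s := by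
      intro s h0s hst0
      have := hmono ⟨le_rfl, ht0.le⟩ ⟨h0s, hst0⟩ h0s
      rwa [hw0] at this
    rcases eq_or_lt_of_le hn with hn1 | hn1
    · -- case n = 1
      have hdiff1 : ∀ t : ℝ, 0 < t →
          DifferentiableAt ℝ G t ∧ deriv G t = -(t ^ α * w t ^ q) := by
        intro t ht
        rcases hdich t ht with ⟨hd, hder⟩ | heq
        · refine ⟨hd, ?_⟩
          rw [hder, ← hn1]
          norm_num
        · exfalso
          rw [← hn1] at heq
          norm_num at heq
          rcases heq with h | h
          · exact absurd h (ne_of_gt (htα t ht))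
          · exact absurd h (ne_of_gt (hwq t ht.le))
      by_cases hex : ∃ t1 : ℝ, 0 < t1 ∧ G t1 < 0
      · obtain ⟨t1, ht1, hGt1⟩ := hex
        have hant : AntitoneOn G (Ici t1) := by
          apply antitoneOn_of_deriv_nonpos (convex_Ici t1)
            (hGc.mono (fun s hs => lt_of_lt_of_le ht1 hs))
          · rw [interior_Ici]
            exact fun t ht => (hdiff1 t (ht1.trans ht)).1.differentiableWithinAt
          · rw [interior_Ici]
            intro t ht
            rw [(hdiff1 t (ht1.trans ht)).2]
            have := mul_pos (htα t (ht1.trans ht)) (hwq t (ht1.trans ht).le)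
            linarith
        set g : ℝ := -G (t1+1) with hgdef
        have hgpos : 0 < g := by
          have := hprop t1 ht1 hGt1 (t1+1) (by linarith)
          rw [hgdef]; linarith
        set c0 : ℝ := g ^ (p-1)⁻¹ with hc0def
        have hc0pos : 0 < c0 := Real.rpow_pos_of_pos hgpos _
        have hφc0 : φ (-c0) = -g := by
          rw [hφneg _ (by linarith : -c0 < 0), neg_neg, hc0def, ← Real.rpow_mul hgpos.le,
            inv_mul_cancel₀ (ne_of_gt hp1), Real.rpow_one]
        have hder : ∀ t : ℝ, t1 + 1 < t → deriv w t ≤ -c0 := by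
          intro t htt
          have hGle : G t ≤ -g := by
            have h1 := hant (le_refl t1 |>.trans (by linarith) : t1 ∈ Ici t1)
            have h2 : G t ≤ G (t1+1) :=
              hant (by simp : t1 + 1 ∈ Ici t1) (by simp; linarith : t ∈ Ici t1) (by linarith)
            rw [hgdef]; linarith
          have h3 : φ (deriv w t) ≤ φ (-c0) := by rw [hφc0]; exact hGle
          exact hφm.le_iff_le.mp h3
        exact aux_decay hc0pos (hwc.mono (fun s hs => le_trans (by linarith) (mem_Ici.mp hs)))
          (fun t ht => hwd t (by linarith)) hder (fun t ht => (hpos t (by linarith)).le)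
      · push_neg at hex
        have hwd0' : ∀ s : ℝ, 0 < s → 0 ≤ deriv w s := by
          intro s hs
          have h1 := hex s hs
          by_contra hneg
          push_neg at hneg
          have h2 : φ (deriv w s) < φ 0 := hφm hneg
          rw [hφ0] at h2
          exact absurd h1 (not_le.2 h2)
        have hmono' : MonotoneOn w (Ici 0) := by
          apply monotoneOn_of_deriv_nonneg (convex_Ici 0) hwc
          · rw [interior_Ici]
            exact fun t ht => (hwd t ht).differentiableWithinAt
          · rw [interior_Ici]
            exact fun t ht => hwd0' t ht
        have hw1' : ∀ s : ℝ, 0 ≤ s → 1 ≤ w s := by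
          intro s hs
          have := hmono' self_mem_Ici hs hs
          rwa [hw0] at this
        have hderG : ∀ t : ℝ, 1 < t → deriv G t ≤ -1 := by
          intro t ht
          rw [(hdiff1 t (by linarith)).2]
          have h1 : 1 ≤ t ^ α := Real.one_le_rpow (by linarith) hα
          have h2 : 1 ≤ w t ^ q := Real.one_le_rpow (hw1' t (by linarith)) (by linarith)
          nlinarith
        exact aux_decay one_pos (hGc.mono (fun s hs => mem_Ioi.mpr (lt_of_lt_of_le one_pos hs)))
          (fun t ht => (hdiff1 t (by linarith)).1) hderG
          (fun t ht => hex t (by linarith))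
    · -- case 1 < n
      have hn1' : 0 < n - 1 := by linarith
      have hAdiff : ∀ t : ℝ, 0 < t → t ≤ t0 →
          DifferentiableAt ℝ G t ∧ deriv G t = -(((n-1)/t) * G t) - t ^ α * w t ^ q := by
        intro t ht htt0
        rcases hdich t ht with h | heq
        · exact h
        · exfalso
          have h1 : 0 ≤ ((n-1)/t) * G t :=
            mul_nonneg (div_nonneg hn1'.le ht.le) (hA t ht htt0)
          have h2 := mul_pos (htα t ht) (hwq t ht.le)
          linarith
      obtain ⟨C, hC⟩ := (isCompact_Icc : IsCompact (Icc (0:ℝ) t0)).exists_bound_of_continuousOn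
        (hDW.mono Icc_subset_Ici_self)
      have hC0 : 0 ≤ C := le_trans (norm_nonneg _) (hC 0 ⟨le_rfl, ht0.le⟩)
      have hGbound : ∀ s : ℝ, 0 < s → s ≤ t0 → |G s| ≤ (C+1) ^ (p-1) := by
        intro s hs hst
        have h1 : |deriv w s| ≤ C := by
          rw [← hDeq s hs, ← Real.norm_eq_abs]
          exact hC s ⟨hs.le, hst⟩
        rw [habsφ]
        exact Real.rpow_le_rpow (abs_nonneg _) (by linarith) hp1.le
      set Φ : ℝ → ℝ := fun t => (n+α) * (t ^ (n-1) * G t) + t ^ (n+α) with hΦdef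
      have hΦd : ∀ t : ℝ, 0 < t → t ≤ t0 →
          HasDerivAt Φ ((n+α) * t ^ (n+α-1) * (1 - w t ^ q)) t := by
        intro t ht htt0
        obtain ⟨hGd, hGder⟩ := hAdiff t ht htt0
        have h1 : HasDerivAt (fun x : ℝ => x ^ (n-1)) ((n-1) * t ^ (n-1-1)) t :=
          Real.hasDerivAt_rpow_const (Or.inl ht.ne')
        have h3 : HasDerivAt (fun x : ℝ => x ^ (n+α)) ((n+α) * t ^ (n+α-1)) t :=
          Real.hasDerivAt_rpow_const (Or.inl ht.ne')
        have h4 := ((h1.mul hGd.hasDerivAt).const_mul (n+α)).add h3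
        have e1 : t ^ (n-1-1) * t = t ^ (n-1) := by
          rw [← Real.rpow_add_one ht.ne']
          congr 1
          ring
        have e2 : t ^ (n-1) * t ^ α = t ^ (n+α-1) := by
          rw [← Real.rpow_add ht]
          congr 1
          ring
        refine h4.congr_deriv ?_
        symm
        rw [hGder, ← e2, ← e1]
        field_simp
        ring
      have hcontΦ : ContinuousOn Φ (Ioc 0 t0) := by
        intro t ht
        have h1 : ContinuousAt (fun x : ℝ => x ^ (n-1)) t :=
          Real.continuousAt_rpow_const t (n-1) (Or.inl (ne_of_gt ht.1))
        have h3 : ContinuousAt (fun x : ℝ => x ^ (n+α)) t :=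
          Real.continuousAt_rpow_const t (n+α) (Or.inl (ne_of_gt ht.1))
        exact ((continuousAt_const.mul (h1.mul (hGat t ht.1))).add h3).continuousWithinAt
      have hantΦ : AntitoneOn Φ (Ioc 0 t0) := by
        apply antitoneOn_of_deriv_nonpos (convex_Ioc 0 t0) hcontΦ
        · rw [interior_Ioc]
          exact fun t ht => (hΦd t ht.1 ht.2.le).differentiableAt.differentiableWithinAt
        · rw [interior_Ioc]
          intro t ht
          rw [(hΦd t ht.1 ht.2.le).deriv]
          have h1 : 1 ≤ w t ^ q := Real.one_le_rpow (hw1 t ht.1.le ht.2.le) (by linarith)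
          have h2 : 0 ≤ (n+α) * t ^ (n+α-1) :=
            mul_nonneg (by linarith) (Real.rpow_pos_of_pos ht.1 _).le
          nlinarith
      have hmem0 : Ioc 0 t0 ∈ 𝓝[>] (0:ℝ) := Ioc_mem_nhdsGT_of_mem ⟨le_rfl, ht0⟩
      have hle : ∀ᶠ ε in 𝓝[>] (0:ℝ), Φ t0 ≤ Φ ε := by
        filter_upwards [hmem0] with ε hε
        exact hantΦ hε ⟨ht0, le_rfl⟩ hε.2
      have hrpow0 : ∀ y : ℝ, 0 < y → Tendsto (fun ε : ℝ => ε ^ y) (𝓝[>] (0:ℝ)) (𝓝 0) := by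
        intro y hy
        have h2 := (Real.continuousAt_rpow_const 0 y (Or.inr hy.le)).tendsto
        rw [Real.zero_rpow (ne_of_gt hy)] at h2
        exact h2.mono_left nhdsWithin_le_nhds
      have htend : Tendsto Φ (𝓝[>] (0:ℝ)) (𝓝 0) := by
        have ht1 : Tendsto (fun ε : ℝ => (n+α) * (ε ^ (n-1) * G ε)) (𝓝[>] (0:ℝ)) (𝓝 0) := by
          apply squeeze_zero_norm' (a := fun ε : ℝ => ((n+α) * (C+1) ^ (p-1)) * ε ^ (n-1))
          · filter_upwards [hmem0] with ε hε
            have hb := hGbound ε hε.1 hε.2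
            have h0 : (0:ℝ) ≤ ε ^ (n-1) := (Real.rpow_pos_of_pos hε.1 _).le
            rw [Real.norm_eq_abs, abs_mul, abs_mul, abs_of_pos (by linarith : (0:ℝ) < n + α),
              abs_of_nonneg h0]
            have h5 : ε ^ (n-1) * |G ε| ≤ ε ^ (n-1) * (C+1) ^ (p-1) :=
              mul_le_mul_of_nonneg_left hb h0
            nlinarith
          · have := (hrpow0 (n-1) hn1').const_mul ((n+α) * (C+1) ^ (p-1))
            simpa using this
        have ht2 : Tendsto (fun ε : ℝ => ε ^ (n+α)) (𝓝[>] (0:ℝ)) (𝓝 0) :=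
          hrpow0 (n+α) (by linarith)
        have := ht1.add ht2
        rw [add_zero] at this
        exact this
      have hΦt0 : Φ t0 ≤ 0 := ge_of_tendsto htend hle
      have hpos1 : 0 < Φ t0 := by
        have h1 : 0 ≤ (n+α) * (t0 ^ (n-1) * G t0) :=
          mul_nonneg (by linarith) (mul_nonneg (Real.rpow_pos_of_pos ht0 _).le hGt0)
        have h2 : 0 < t0 ^ (n+α) := Real.rpow_pos_of_pos ht0 _
        show (0:ℝ) < (n+α) * (t0 ^ (n-1) * G t0) + t0 ^ (n+α)
        linarith
      linarith
  -- strict antitonicity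
  have hderivneg : ∀ t : ℝ, 0 < t → deriv w t < 0 := by
    intro t ht
    have h := hGneg t ht
    by_contra hcon
    push_neg at hcon
    have h2 : φ 0 ≤ φ (deriv w t) := hφm.le_iff_le.mpr hcon
    rw [hφ0] at h2
    exact absurd (lt_of_le_of_lt h2 h) (lt_irrefl 0)
  have hanti : StrictAntiOn w (Ioi 0) := by
    apply strictAntiOn_of_deriv_neg (convex_Ioi 0) (hwc.mono Ioi_subset_Ici_self)
    rw [interior_Ioi]
    exact fun t ht => hderivneg t ht
  refine ⟨hanti, ?_⟩
  -- limit exists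
  set g : ℝ → ℝ := fun t => w (max t 1) with hgdef
  have hganti : Antitone g := by
    intro s t hst
    have h1 : max s 1 ≤ max t 1 := max_le_max hst le_rfl
    rcases eq_or_lt_of_le h1 with he | hlt
    · show w (max t 1) ≤ w (max s 1)
      rw [← he]
    · exact (hanti (lt_of_lt_of_le zero_lt_one (le_max_right s 1))
        (lt_of_lt_of_le zero_lt_one (le_max_right t 1)) hlt).le
  have hgbdd : BddBelow (range g) := by
    refine ⟨0, ?_⟩
    rintro x ⟨t, rfl⟩
    exact (hpos _ (le_trans zero_le_one (le_max_right t 1))).le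
  have htendg : Tendsto g atTop (𝓝 (⨅ t, g t)) := tendsto_atTop_ciInf hganti hgbdd
  set L : ℝ := ⨅ t, g t with hLdef
  have hLw : Tendsto w atTop (𝓝 L) := by
    refine htendg.congr' ?_
    filter_upwards [eventually_ge_atTop (1:ℝ)] with t ht
    show w (max t 1) = w t
    rw [max_eq_left ht]
  have hL0 : 0 ≤ L :=
    le_ciInf fun t => (hpos _ (le_trans zero_le_one (le_max_right t 1))).le
  have hLle : ∀ t : ℝ, 1 ≤ t → L ≤ w t := by
    intro t ht
    have h := ciInf_le hgbdd t
    rw [hLdef]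
    have : g t = w t := by show w (max t 1) = w t; rw [max_eq_left ht]
    rwa [this] at h
  rcases eq_or_lt_of_le hL0 with h0 | hLpos
  · rwa [← h0] at hLw
  exfalso
  -- quantitative decay: ψ t := t^(n-1) G t + c (t^(n+α) - 1) stays negative on [1,∞)
  have hLq : 0 < L ^ q := Real.rpow_pos_of_pos hLpos q
  have hmn : (0:ℝ) < n + α + n := by linarith
  set c : ℝ := L ^ q / (n + α + n) with hcdef
  have hc : 0 < c := div_pos hLq hmn
  have hcm : c * (n + α) < L ^ q := by
    rw [hcdef, div_mul_eq_mul_div, div_lt_iff₀ hmn]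
    nlinarith
  have hcn : c * (n - 1) < L ^ q := by
    rw [hcdef, div_mul_eq_mul_div, div_lt_iff₀ hmn]
    nlinarith
  set ψ : ℝ → ℝ := fun t => t ^ (n-1) * G t + c * (t ^ (n+α) - 1) with hψdef
  have hψ1 : ψ 1 < 0 := by
    have h1 := hGneg 1 one_pos
    show (1:ℝ) ^ (n-1) * G 1 + c * ((1:ℝ) ^ (n+α) - 1) < 0
    rw [Real.one_rpow, Real.one_rpow]
    ring_nf
    linarith
  have hψneg : ∀ t : ℝ, 1 ≤ t → ψ t < 0 := by
    by_contra hcon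
    push_neg at hcon
    obtain ⟨t1, ht1, hψt1⟩ := hcon
    have h11 : (1:ℝ) < t1 := lt_of_le_of_ne ht1 (by rintro rfl; linarith)
    have hψcont : ContinuousOn ψ (Icc 1 t1) := by
      intro t htm
      have ht0 : (0:ℝ) < t := lt_of_lt_of_le one_pos htm.1
      have h1 : ContinuousAt (fun x : ℝ => x ^ (n-1)) t :=
        Real.continuousAt_rpow_const t (n-1) (Or.inl ht0.ne')
      have h2 : ContinuousAt (fun x : ℝ => x ^ (n+α)) t :=
        Real.continuousAt_rpow_const t (n+α) (Or.inl ht0.ne')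
      exact ((h1.mul (hGat t ht0)).add
        (continuousAt_const.mul (h2.sub continuousAt_const))).continuousWithinAt
    obtain ⟨u, ⟨h1u, hut1⟩, hψu, hmin⟩ := aux_first h11 hψcont hψ1 hψt1
    have hu0 : (0:ℝ) < u := lt_trans one_pos h1u
    have hwu : L ≤ w u := hLle u h1u.le
    have hwuq : L ^ q ≤ w u ^ q := Real.rpow_le_rpow hL0 hwu (by linarith)
    have hum : 1 < u ^ (n+α) := by
      have h2 := Real.rpow_le_rpow_of_exponent_le h1u.le (by linarith : (1:ℝ) ≤ n + α)
      rw [Real.rpow_one] at h2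
      linarith
    have e1 : u ^ (n-1-1) * u = u ^ (n-1) := by
      rw [← Real.rpow_add_one hu0.ne']; congr 1; ring
    have e2 : u ^ (n-1) * u ^ α = u ^ (n+α-1) := by
      rw [← Real.rpow_add hu0]; congr 1; ring
    rcases hdich u hu0 with ⟨hGd, hGder⟩ | heq
    · -- differentiable case
      have h1 : HasDerivAt (fun x : ℝ => x ^ (n-1)) ((n-1) * u ^ (n-1-1)) u :=
        Real.hasDerivAt_rpow_const (Or.inl hu0.ne')
      have h3 : HasDerivAt (fun x : ℝ => c * (x ^ (n+α) - 1)) (c * ((n+α) * u ^ (n+α-1))) u :=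
        ((Real.hasDerivAt_rpow_const (Or.inl hu0.ne')).sub_const 1).const_mul c
      have h4 := (h1.mul hGd.hasDerivAt).add h3
      have h5 : HasDerivAt ψ (u ^ (n+α-1) * (c * (n+α) - w u ^ q)) u := by
        refine h4.congr_deriv ?_
        symm
        rw [hGder, ← e2, ← e1]
        field_simp
        ring
      have h6 : 0 ≤ deriv ψ u :=
        aux_slope h1u h5.differentiableAt
          (fun s hs => le_trans (hmin s hs.1.le hs.2).le hψu)
      rw [h5.deriv] at h6
      have h7 : 0 < u ^ (n+α-1) := Real.rpow_pos_of_pos hu0 _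
      have h8 : c * (n+α) - w u ^ q < 0 := by linarith
      have h9 := mul_neg_of_pos_of_neg h7 h8
      linarith
    · -- non-differentiable case
      have hn1 : 0 < n - 1 := by
        rcases eq_or_lt_of_le hn with h | h
        · exfalso
          rw [← h] at heq
          norm_num at heq
          rcases heq with h' | h'
          · exact absurd h' (ne_of_gt (htα u hu0))
          · exact absurd h' (ne_of_gt (hwq u hu0.le))
        · linarith
      have h3 : (n-1) * G u = -(u ^ α * w u ^ q) * u := by
        have h4 := congrArg (fun x : ℝ => x * u) heq
        field_simp at h4
        linarith
      have e3 : u ^ (n-1) * u ^ α * u = u ^ (n+α) := by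
        rw [← Real.rpow_add hu0, ← Real.rpow_add_one hu0.ne']
        congr 1
        ring
      have h5 : (n-1) * (u ^ (n-1) * G u) = -(u ^ (n+α) * w u ^ q) := by
        rw [← e3]
        linear_combination (u ^ (n-1)) * h3
      have hψu' : (0:ℝ) ≤ u ^ (n-1) * G u + c * (u ^ (n+α) - 1) := hψu
      have h9 : 0 ≤ (n-1) * (u ^ (n-1) * G u) + (n-1) * (c * (u ^ (n+α) - 1)) := by
        have := mul_nonneg (by linarith : (0:ℝ) ≤ n - 1) hψu'
        rw [mul_add] at this
        exact this
      rw [h5] at h9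
      have h10 : 0 < u ^ (n+α) := Real.rpow_pos_of_pos hu0 _
      have hint1 := mul_lt_mul_of_pos_right hcn (show (0:ℝ) < u ^ (n+α) - 1 by linarith)
      have hint2 := mul_le_mul_of_nonneg_left hwuq h10.le
      linarith [h9, hint1, hint2, hLq]
  -- from ψ < 0, get a uniform slope bound for large t
  set t2 : ℝ := max 2 (2/c) with ht2def
  have ht2a : (2:ℝ) ≤ t2 := le_max_left _ _
  have hderw : ∀ t : ℝ, t2 < t → deriv w t ≤ -1 := by
    intro t ht
    have ht2' : (2:ℝ) ≤ t := le_trans ht2a ht.le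
    have ht1 : (1:ℝ) ≤ t := by linarith
    have ht0 : (0:ℝ) < t := by linarith
    have hψt : t ^ (n-1) * G t + c * (t ^ (n+α) - 1) < 0 := hψneg t ht1
    have hta : t ≤ t ^ (n+α) := by
      have h := Real.rpow_le_rpow_of_exponent_le ht1 (by linarith : (1:ℝ) ≤ n + α)
      rwa [Real.rpow_one] at h
    have htm2 : (2:ℝ) ≤ t ^ (n+α) := le_trans ht2' hta
    have htc : 2/c ≤ t := le_trans (le_max_right 2 (2/c)) ht.le
    have ht1α : t ≤ t ^ (1+α) := by
      have h := Real.rpow_le_rpow_of_exponent_le ht1 (by linarith : (1:ℝ) ≤ 1 + α)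
      rwa [Real.rpow_one] at h
    have e3 : t ^ (n-1) * t ^ (1+α) = t ^ (n+α) := by
      rw [← Real.rpow_add ht0]; congr 1; ring
    have h3 : 0 < t ^ (n-1) := Real.rpow_pos_of_pos ht0 _
    have h2 : 2 ≤ c * t ^ (1+α) := by
      have h1 : 2/c ≤ t ^ (1+α) := le_trans htc ht1α
      rw [div_le_iff₀ hc] at h1
      linarith
    have hberiv : t ^ (n-1) ≤ c * (t ^ (n+α) - 1) := by
      have e3c : c * (t ^ (n-1) * t ^ (1+α)) = c * t ^ (n+α) := by rw [e3]
      have hint1 := mul_le_mul_of_nonneg_left h2 h3.le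
      have hint2 := mul_le_mul_of_nonneg_left htm2 hc.le
      linarith [hint1, hint2, e3c]
    have h4 : t ^ (n-1) * G t ≤ t ^ (n-1) * (-1) := by linarith [hψt, hberiv]
    have hG1 : G t ≤ -1 := le_of_mul_le_mul_left (by linarith [h4]) h3
    have hφm1 : φ (-1 : ℝ) = -1 := by
      rw [hφneg _ (by norm_num : (-1:ℝ) < 0), neg_neg, Real.one_rpow]
    have h5 : φ (deriv w t) ≤ φ (-1) := by rw [hφm1]; exact hG1
    exact hφm.le_iff_le.mp h5
  exact aux_decay one_pos (hwc.mono (fun s hs => le_trans (by linarith) (mem_Ici.mp hs)))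
    (fun t ht => hwd t (by linarith)) hderw (fun t ht => (hpos t (by linarith)).le)
end
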